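/- arXiv:2006.00336 — 7 statements merged into one kernel-verified Lean document; each statement's English description precedes it below -/
import Mathlib

section
/- Let K be a C-symmetric convex body in C^n that is also a real ellipsoid (the image of the unit ball of R^{2n} under a real linear isomorphism, centered at the origin). Then K is a complex ellipsoid, i.e., the image of the unit ball of C^n under a C-linear isomorphism. -/
open Metric Submodule Pointwise

noncomputable section

abbrev Cn (n : ℕ) := EuclideanSpace ℂ (Fin n)

def IsConvexBody {E : Type*} [NormedAddCommGroup E] [InnerProductSpace ℂ E]
    (K : Set E) : Prop :=
  IsCompact K ∧ Convex ℝ K ∧ (interior K).Nonempty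

def CSymmetric {E : Type*} [NormedAddCommGroup E] [InnerProductSpace ℂ E]
    (K : Set E) : Prop :=
  ∀ c : ℂ, ‖c‖ = 1 → c • K = K

/-- Type synonym for `Cn n` carrying the norm induced by the ellipsoid `g '' closedBall 0 1`. -/
def Eg {n : ℕ} (_g : Cn n ≃L[ℝ] Cn n) : Type _ := Cn n

section EgAux

variable {n : ℕ} (g : Cn n ≃L[ℝ] Cn n)

instance : AddCommGroup (Eg g) := inferInstanceAs (AddCommGroup (Cn n))
instance : Module ℂ (Eg g) := inferInstanceAs (Module ℂ (Cn n))

def egHom : Eg g →+ Cn n where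
  toFun x := g.symm (show Cn n from x)
  map_zero' := by exact map_zero g.symm
  map_add' x y := by exact map_add g.symm _ _

noncomputable instance : NormedAddCommGroup (Eg g) :=
  NormedAddCommGroup.induced (Eg g) (Cn n) (egHom g) (fun x y h => by
    exact g.symm.injective (show g.symm (show Cn n from x) = g.symm (show Cn n from y) from h))

def EgEquiv : Cn n ≃ₗ[ℂ] Eg g := LinearEquiv.refl ℂ (Cn n)

lemma eg_norm (x : Eg g) : ‖x‖ = ‖g.symm (show Cn n from x)‖ := rfl

instance : FiniteDimensional ℂ (Eg g) := Module.Finite.equiv (EgEquiv g)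

lemma eg_finrank : Module.finrank ℂ (Eg g) = n :=
  ((EgEquiv g).symm.finrank_eq).trans finrank_euclideanSpace_fin

end EgAux

/-- A C-symmetric convex body in ℂⁿ that is a real ellipsoid (image of the unit
ball under an invertible real-linear map) is a complex ellipsoid. -/
theorem stmt0 {n : ℕ} (K : Set (Cn n))
    (hbody : IsConvexBody K) (hsym : CSymmetric K)
    (hreal : ∃ g : Cn n ≃L[ℝ] Cn n, g '' closedBall 0 1 = K) :
    ∃ h : Cn n ≃L[ℂ] Cn n, h '' closedBall 0 1 = K := by
  obtain ⟨g, hg⟩ := hreal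
  set N : Cn n → ℝ := fun x => ‖g.symm x‖ with hN
  -- membership in K is described by N
  have hK : ∀ y : Cn n, y ∈ K ↔ N y ≤ 1 := by
    intro y
    rw [← hg]
    constructor
    · rintro ⟨x, hx, rfl⟩
      simpa [N] using mem_closedBall_zero_iff.mp hx
    · intro hy
      exact ⟨g.symm y, mem_closedBall_zero_iff.mpr hy, g.apply_symm_apply y⟩
  -- N is homogeneous for real scalars
  have hNreal : ∀ (r : ℝ) (x : Cn n), N (r • x) = |r| * N x := by
    intro r x
    simp [N, map_smul, norm_smul, Real.norm_eq_abs]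
  have hNzero : ∀ x : Cn n, N x = 0 ↔ x = 0 := by
    intro x
    simp [N, norm_eq_zero, EmbeddingLike.map_eq_zero_iff]
  have hNnonneg : ∀ x : Cn n, 0 ≤ N x := fun x => norm_nonneg _
  -- key step: invariance of N under unit scalars, first an inequality
  have unit_le : ∀ u : ℂ, ‖u‖ = 1 → ∀ x : Cn n, N x ≤ N (u • x) := by
    intro u hu x
    have hu0 : u ≠ 0 := by
      intro h; rw [h] at hu; simp at hu
    rcases eq_or_ne x 0 with rfl | hx0
    · simp
    have hb : 0 < N (u • x) := by
      rcases lt_or_eq_of_le (hNnonneg (u • x)) with h | h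
      · exact h
      · exfalso
        have : u • x = 0 := (hNzero _).mp h.symm
        exact hx0 (by simpa [hu0] using smul_eq_zero.mp this)
    set b := N (u • x) with hbdef
    -- rescale so that `u • (b⁻¹ • x)` lies on the boundary of `K`
    have h1 : N (u • (b⁻¹ • x)) ≤ 1 := by
      have heq : u • (b⁻¹ • x) = b⁻¹ • (u • x) := smul_comm u (b⁻¹ : ℝ) x
      rw [heq, hNreal, abs_of_pos (inv_pos.mpr hb), inv_mul_cancel₀ (ne_of_gt hb)]
    have hmem : u • (b⁻¹ • x) ∈ K := (hK _).mpr h1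
    have hmem2 : (b⁻¹ • x) ∈ K := by
      rw [← hsym u hu] at hmem
      exact (Set.smul_mem_smul_set_iff₀ hu0 K _).mp hmem
    have hle : N (b⁻¹ • x) ≤ 1 := (hK _).mp hmem2
    rw [hNreal, abs_of_pos (inv_pos.mpr hb), inv_mul_le_iff₀ hb, mul_one] at hle
    exact hle
  have unit_eq : ∀ u : ℂ, ‖u‖ = 1 → ∀ x : Cn n, N (u • x) = N x := by
    intro u hu x
    have hu0 : u ≠ 0 := by intro h; rw [h] at hu; simp at hu
    refine le_antisymm ?_ (unit_le u hu x)
    have huinv : ‖u⁻¹‖ = 1 := by rw [norm_inv, hu]; norm_num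
    have := unit_le u⁻¹ huinv (u • x)
    rwa [smul_smul, inv_mul_cancel₀ hu0, one_smul] at this
  -- full complex homogeneity of N
  have chom : ∀ (c : ℂ) (x : Cn n), N (c • x) = ‖c‖ * N x := by
    intro c x
    rcases eq_or_ne c 0 with rfl | hc0
    · simp [hNzero]
    · have hcn : (0:ℝ) < ‖c‖ := norm_pos_iff.mpr hc0
      set u : ℂ := (‖c‖ : ℂ)⁻¹ * c with hudef
      have hu : ‖u‖ = 1 := by
        rw [hudef, norm_mul, norm_inv, Complex.norm_real, Real.norm_eq_abs,
          abs_of_pos hcn, inv_mul_cancel₀ (ne_of_gt hcn)]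
      have hcu : c • x = (‖c‖ : ℝ) • (u • x) := by
        rw [← Complex.coe_smul, smul_smul, hudef, ← mul_assoc,
          mul_inv_cancel₀ (by exact_mod_cast ne_of_gt hcn), one_mul]
      rw [hcu, hNreal, abs_of_pos hcn, unit_eq u hu x]
  -- Upgrade the type synonym `Eg g` to a complex inner product space
  letI : NormedSpace ℂ (Eg g) :=
    { (inferInstance : Module ℂ (Eg g)) with
      norm_smul_le := fun c x => le_of_eq (chom c (show Cn n from x)) }
  letI : InnerProductSpace ℂ (Eg g) := by
    refine InnerProductSpace.ofNorm ℂ (fun x y => ?_)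
    show ‖g.symm (@id (Cn n) x + @id (Cn n) y)‖ * ‖g.symm (@id (Cn n) x + @id (Cn n) y)‖ + ‖g.symm (@id (Cn n) x - @id (Cn n) y)‖ * ‖g.symm (@id (Cn n) x - @id (Cn n) y)‖ = _
    rw [map_add, map_sub]
    have hpl := parallelogram_law_with_norm ℂ (g.symm (show Cn n from x))
      (g.symm (show Cn n from y))
    simp only [sq] at hpl
    exact hpl
  -- orthonormal basis of `Eg g` gives a complex-linear isometry with `Cn n`
  let b : OrthonormalBasis (Fin n) ℂ (Eg g) :=
    (stdOrthonormalBasis ℂ (Eg g)).reindex (finCongr (eg_finrank g))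
  let li : Eg g ≃ₗᵢ[ℂ] Cn n := b.repr
  let L : Cn n ≃ₗ[ℂ] Cn n := li.toLinearEquiv.symm.trans (EgEquiv g).symm
  have hL : ∀ x : Cn n, N (L x) = ‖x‖ := by
    intro x
    have : N (L x) = ‖li.symm x‖ := rfl
    rw [this, li.symm.norm_map]
  refine ⟨L.toContinuousLinearEquiv, ?_⟩
  ext y
  constructor
  · rintro ⟨x, hx, rfl⟩
    rw [hK]
    show N (L x) ≤ 1
    rw [hL]
    exact mem_closedBall_zero_iff.mp hx
  · intro hy
    refine ⟨L.symm y, mem_closedBall_zero_iff.mpr ?_, ?_⟩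
    · rw [← hL (L.symm y), L.apply_symm_apply]
      exact (hK y).mp hy
    · show L (L.symm y) = y
      exact L.apply_symm_apply y
end
end

section
/- Let B ⊆ C^{n+1}, n ≥ 2, be a C-symmetric convex body all of whose sections by complex hyperplanes through the origin are complex ellipsoids. Then B is a complex ellipsoid. -/
open Metric Submodule Pointwise

noncomputable section

def IsCEllipsoid {E : Type*} [NormedAddCommGroup E] [InnerProductSpace ℂ E]
    (K : Set E) : Prop :=
  ∃ g : E ≃L[ℂ] E, g '' closedBall 0 1 = K


open Module in
lemma aux_exists_inter {K V : Type*} [Field K] [AddCommGroup V] [Module K V]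
    [FiniteDimensional K V] (W : Submodule K V) {n : ℕ}
    (hW : finrank K W ≤ n) (hn : n ≤ finrank K V) :
    ∃ Γ : Submodule K V, W ≤ Γ ∧ finrank K Γ = n := by
  obtain ⟨k, hk⟩ : ∃ k, finrank K W + k = n := ⟨n - finrank K W, by omega⟩
  clear hW
  induction k generalizing W with
  | zero => exact ⟨W, le_rfl, by omega⟩
  | succ k ih =>
    have hlt : finrank K W < finrank K V := by omega
    obtain ⟨m, hm⟩ := Submodule.exists_of_finrank_lt W hlt
    have hmW : m ∉ W := by simpa using hm 1 one_ne_zero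
    have hm0 : m ≠ 0 := fun h => hmW (h ▸ W.zero_mem)
    set W' := W ⊔ K ∙ m with hW'
    have hlt' : W < W' := lt_of_le_of_ne le_sup_left (fun h => hmW
      (h ▸ le_sup_right (α := Submodule K V) (mem_span_singleton_self m)))
    have h1 : finrank K W < finrank K W' := Submodule.finrank_lt_finrank_of_lt hlt'
    have h2 : finrank K W' ≤ finrank K W + 1 := by
      have := Submodule.finrank_add_le_finrank_add_finrank W (K ∙ m)
      rwa [finrank_span_singleton hm0] at this
    have h3 : finrank K W' = finrank K W + 1 := le_antisymm h2 h1
    obtain ⟨Γ, hΓ1, hΓ2⟩ := ih W' (by omega)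
    exact ⟨Γ, le_trans le_sup_left hΓ1, hΓ2⟩

open Module
structure CNorm (E : Type*) [AddCommGroup E] [Module ℂ E] where
  p : Seminorm ℂ E
  eq_zero : ∀ x, p x = 0 → x = 0
def PSpace {E : Type*} [AddCommGroup E] [Module ℂ E] (q : CNorm E) := E
variable {E : Type*} [AddCommGroup E] [Module ℂ E] (q : CNorm E)
instance : NormedAddCommGroup (PSpace q) :=
  @AddGroupNorm.toNormedAddCommGroup E _
    { toFun := fun x => q.p x
      map_zero' := map_zero q.p
      add_le' := map_add_le_add q.p
      neg' := map_neg_eq_map q.p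
      eq_zero_of_map_eq_zero' := q.eq_zero }
instance : NormedSpace ℂ (PSpace q) :=
  { toModule := inferInstanceAs (Module ℂ E)
    norm_smul_le := fun c x => le_of_eq (map_smul_eq_mul q.p c x) }
def PSpace.equiv : PSpace q ≃ₗ[ℂ] E where
  toFun := fun x => x
  invFun := fun x => x
  map_add' := fun _ _ => rfl
  map_smul' := fun _ _ => rfl
  left_inv := fun _ => rfl
  right_inv := fun _ => rfl
instance [Module.Finite ℂ E] : Module.Finite ℂ (PSpace q) :=
  Module.Finite.equiv (PSpace.equiv q).symm


theorem cnorm_ellipsoid {E : Type*} [NormedAddCommGroup E] [InnerProductSpace ℂ E]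
    [FiniteDimensional ℂ E] (q : CNorm E)
    (hpar : ∀ x y : E, q.p (x + y) * q.p (x + y) + q.p (x - y) * q.p (x - y)
      = 2 * (q.p x * q.p x + q.p y * q.p y)) :
    ∃ g : E ≃L[ℂ] E, g '' Metric.closedBall 0 1 = {x | q.p x ≤ 1} := by
  letI : InnerProductSpace ℂ (PSpace q) := InnerProductSpace.ofNorm ℂ (fun x y => hpar x y)
  have hfr : finrank ℂ E = finrank ℂ (PSpace q) := ((PSpace.equiv q).finrank_eq).symm
  let φ₁ : E ≃ₗᵢ[ℂ] EuclideanSpace ℂ (Fin (finrank ℂ (PSpace q))) :=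
    ((stdOrthonormalBasis ℂ E).reindex (finCongr hfr)).repr
  let φ₂ : PSpace q ≃ₗᵢ[ℂ] EuclideanSpace ℂ (Fin (finrank ℂ (PSpace q))) :=
    (stdOrthonormalBasis ℂ (PSpace q)).repr
  let L : E ≃ₗ[ℂ] E :=
    (φ₁.toLinearEquiv.trans φ₂.symm.toLinearEquiv).trans (PSpace.equiv q)
  let g : E ≃L[ℂ] E := L.toContinuousLinearEquiv
  have hsymm : ∀ x : E, ‖((PSpace.equiv q).symm x : PSpace q)‖ = q.p x := fun _ => rfl
  refine ⟨g, ?_⟩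
  ext x
  rw [g.image_eq_preimage_symm]
  have hg : g.symm x = φ₁.symm (φ₂ ((PSpace.equiv q).symm x)) := rfl
  simp only [Set.mem_preimage, Metric.mem_closedBall, dist_zero_right, Set.mem_setOf_eq, hg]
  rw [φ₁.symm.norm_map, φ₂.norm_map, hsymm]

theorem seminorm_ellipsoid {E : Type*} [NormedAddCommGroup E] [InnerProductSpace ℂ E]
    [FiniteDimensional ℂ E] (p : Seminorm ℂ E) (hdef : ∀ x, p x = 0 → x = 0)
    (hpar : ∀ x y : E, p (x + y) * p (x + y) + p (x - y) * p (x - y)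
      = 2 * (p x * p x + p y * p y)) :
    ∃ g : E ≃L[ℂ] E, g '' Metric.closedBall 0 1 = {x | p x ≤ 1} :=
  cnorm_ellipsoid ⟨p, hdef⟩ hpar

set_option maxHeartbeats 1000000 in
/-- If all complex hyperplane sections of a C-symmetric convex body
`B ⊆ ℂ^{n+1}`, `n ≥ 2`, are complex ellipsoids, then `B` is a complex ellipsoid. -/
theorem stmt1 {n : ℕ} (hn : 2 ≤ n) (B : Set (Cn (n + 1)))
    (hbody : IsConvexBody B) (hsym : CSymmetric B)
    (hsec : ∀ Γ : Submodule ℂ (Cn (n + 1)), Module.finrank ℂ Γ = n →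
      IsCEllipsoid ((↑) ⁻¹' B : Set Γ)) :
    IsCEllipsoid B := by
  obtain ⟨hcomp, hconv, x₀, hx₀⟩ := hbody
  have hneg : (-1 : ℂ) • B = B := hsym (-1) (by norm_num)
  have h0i : (0 : Cn (n + 1)) ∈ interior B := by
    have h2 : -x₀ ∈ interior B := by
      have h3 : (-1 : ℂ) • interior B = interior B := by
        rw [← interior_smul₀ (by norm_num : (-1 : ℂ) ≠ 0) B, hneg]
      rw [← h3]
      exact ⟨x₀, hx₀, by simp⟩
    have := (hconv.interior) hx₀ h2 (by norm_num : (0:ℝ) ≤ 1/2)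
      (by norm_num : (0:ℝ) ≤ 1/2) (by norm_num)
    simpa using this
  have h0 : (0 : Cn (n + 1)) ∈ B := interior_subset h0i
  have hnhds : B ∈ nhds 0 := mem_interior_iff_mem_nhds.mp h0i
  have habs : Absorbent ℝ B := absorbent_nhds_zero hnhds
  have hbdd : Bornology.IsVonNBounded ℝ B :=
    NormedSpace.isVonNBounded_of_isBounded _ hcomp.isBounded
  have hbal : Balanced ℂ B := by
    intro a ha
    rintro x ⟨y, hy, rfl⟩
    rcases eq_or_ne a 0 with rfl | ha0
    · simpa using h0
    · have hna : (0:ℝ) < ‖a‖ := norm_pos_iff.mpr ha0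
      set u : ℂ := (‖a‖ : ℂ)⁻¹ * a with hu
      have hu1 : ‖u‖ = 1 := by
        rw [hu, norm_mul, norm_inv, Complex.norm_real, Real.norm_eq_abs,
          abs_of_pos hna, inv_mul_cancel₀ hna.ne']
      have h2 : u • y ∈ B := by
        rw [← hsym u hu1]; exact ⟨y, hy, rfl⟩
      have hcard : (‖a‖ : ℂ) ≠ 0 := by exact_mod_cast hna.ne'
      have h3 : a • y = (‖a‖ : ℝ) • (u • y) := by
        rw [← algebraMap_smul ℂ (‖a‖ : ℝ) (u • y), Complex.coe_algebraMap,
          smul_smul, hu, ← mul_assoc, mul_inv_cancel₀ hcard, one_mul]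
      show a • y ∈ B
      rw [h3]
      have := hconv h0 h2 (by linarith : (0:ℝ) ≤ 1 - ‖a‖) hna.le (by ring)
      simpa using this
  have hmem1 : ∀ x, gauge B x ≤ 1 ↔ x ∈ B := fun x => by
    rw [gauge_le_one_iff_mem_closure hconv hnhds, hcomp.isClosed.closure_eq]
  set p : Seminorm ℂ (Cn (n + 1)) := gaugeSeminorm hbal hconv habs with hp
  have hpapp : ∀ x, p x = gauge B x := fun x => rfl
  have hdef : ∀ x, p x = 0 → x = 0 := fun x hx =>
    (gauge_eq_zero habs hbdd).mp ((hpapp x) ▸ hx)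
  have hpar : ∀ x y : Cn (n + 1), p (x + y) * p (x + y) + p (x - y) * p (x - y)
      = 2 * (p x * p x + p y * p y) := by
    intro x y
    have hfr : finrank ℂ (Cn (n + 1)) = n + 1 := finrank_euclideanSpace_fin
    have hs1 : ∀ v : Cn (n + 1), finrank ℂ (ℂ ∙ v) ≤ 1 := by
      intro v
      rcases eq_or_ne v 0 with rfl | hv
      · rw [Submodule.span_zero_singleton]; simp
      · rw [finrank_span_singleton hv]
    obtain ⟨Γ, hWΓ, hΓ⟩ := aux_exists_inter ((ℂ ∙ x) ⊔ (ℂ ∙ y))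
      (le_trans (le_trans (Submodule.finrank_add_le_finrank_add_finrank _ _)
        (add_le_add (hs1 x) (hs1 y))) hn)
      (by rw [hfr]; omega)
    obtain ⟨e, he⟩ := hsec Γ hΓ
    have hx : x ∈ Γ := hWΓ (Submodule.mem_sup_left (mem_span_singleton_self x))
    have hy : y ∈ Γ := hWΓ (Submodule.mem_sup_right (mem_span_singleton_self y))
    set x' : Γ := ⟨x, hx⟩
    set y' : Γ := ⟨y, hy⟩
    have hKmem : ∀ w : Γ, ((w : Cn (n + 1)) ∈ B) ↔ ‖e.symm w‖ ≤ 1 := by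
      intro w
      show w ∈ ((↑) ⁻¹' B : Set Γ) ↔ _
      rw [← he, e.image_eq_preimage_symm]
      simp [Set.mem_preimage, mem_closedBall_zero_iff]
    have hsm : ∀ (r : ℝ) (w : Γ), e.symm (r • w) = r • e.symm w := by
      intro r w
      rw [← algebraMap_smul ℂ r w, map_smul, algebraMap_smul]
    have key : ∀ w : Γ, gauge B ↑w = ‖e.symm w‖ := by
      intro w
      rcases eq_or_ne w 0 with rfl | hw
      · simp [gauge_zero]
      · set t := ‖e.symm w‖ with htdef
        have ht : 0 < t := by
          rw [htdef, norm_pos_iff]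
          intro h
          exact hw (by simpa using congrArg e h)
        refine le_antisymm ?_ ?_
        · have hmemB : ((t⁻¹ • w : Γ) : Cn (n + 1)) ∈ B := by
            rw [hKmem, hsm, norm_smul, Real.norm_eq_abs,
              abs_of_pos (inv_pos.mpr ht), inv_mul_cancel₀ ht.ne']
          refine gauge_le_of_mem ht.le ⟨_, hmemB, ?_⟩
          show t • ((t⁻¹ • w : Γ) : Cn (n + 1)) = (w : Cn (n + 1))
          rw [Submodule.coe_smul_of_tower, smul_inv_smul₀ ht.ne']
        · by_contra hlt
          push_neg at hlt
          obtain ⟨r, hr0, hrt, hmem⟩ := exists_lt_of_gauge_lt habs hlt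
          obtain ⟨b, hb, hbw⟩ := hmem
          have hb' : ((r⁻¹ • w : Γ) : Cn (n + 1)) ∈ B := by
            rw [Submodule.coe_smul_of_tower, ← hbw, inv_smul_smul₀ hr0.ne']
            exact hb
          have h1 := (hKmem _).mp hb'
          rw [hsm, norm_smul, Real.norm_eq_abs, abs_of_pos (inv_pos.mpr hr0)] at h1
          have : t ≤ r := by
            rw [inv_mul_le_iff₀ hr0, mul_one] at h1
            exact h1
          linarith
    have e1 : gauge B (x + y) = ‖e.symm x' + e.symm y'‖ := by
      have hxy : x + y = ((x' + y' : Γ) : Cn (n + 1)) := rfl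
      rw [hxy, key, map_add]
    have e2 : gauge B (x - y) = ‖e.symm x' - e.symm y'‖ := by
      have hxy : x - y = ((x' - y' : Γ) : Cn (n + 1)) := rfl
      rw [hxy, key, map_sub]
    have e3 : gauge B x = ‖e.symm x'‖ := key x'
    have e4 : gauge B y = ‖e.symm y'‖ := key y'
    rw [hpapp, hpapp, hpapp, hpapp, e1, e2, e3, e4]
    simpa only [sq] using parallelogram_law_with_norm ℂ (e.symm x') (e.symm y')
  obtain ⟨g, hg⟩ := seminorm_ellipsoid p hdef hpar
  refine ⟨g, ?_⟩
  rw [hg]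
  ext x
  simpa [hpapp] using hmem1 x
end
end

section
/- Let L₁, L₂ be two distinct complex lines through the origin in C^n, n ≥ 3, and let G₁, G₂ ⊆ SU(n) be the subgroups fixing L₁ resp. L₂ pointwise-invariantly (i.e., the complex rotation groups around the axes L₁ and L₂, each conjugate to SU(n−1)). Then any compact subgroup G of SU(n) containing both G₁ and G₂ acts transitively on the unit sphere S^{2n−1} ⊆ C^n. -/
open Metric Submodule
open scoped InnerProductSpace

noncomputable section

/-- The complex rotation group around the axis `L`: elements of `SU(n)`
(unitary matrices of determinant 1) fixing `L` pointwise. -/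
def rotGroup {n : ℕ} (L : Submodule ℂ (Cn n)) :
    Set (Matrix.unitaryGroup (Fin n) ℂ) :=
  {g | (g : Matrix (Fin n) (Fin n) ℂ).det = 1 ∧
    ∀ x : Cn n, x ∈ L → (WithLp.toLp 2 (Matrix.mulVec (g : Matrix (Fin n) (Fin n) ℂ) x) : Cn n) = x}


def act {n : ℕ} (M : Matrix (Fin n) (Fin n) ℂ) (x : Cn n) : Cn n :=
  (WithLp.toLp 2 (Matrix.mulVec M x) : Cn n)

lemma inner_eq {n : ℕ} (x y : Cn n) :
    ⟪x, y⟫_ℂ = dotProduct (star (x : Fin n → ℂ)) (y : Fin n → ℂ) := by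
  simp [PiLp.inner_apply, RCLike.inner_apply, dotProduct, mul_comm]

lemma act_inner {n : ℕ} (g : Matrix.unitaryGroup (Fin n) ℂ) (x y : Cn n) :
    ⟪act (g : Matrix (Fin n) (Fin n) ℂ) x, act (g : Matrix (Fin n) (Fin n) ℂ) y⟫_ℂ = ⟪x, y⟫_ℂ := by
  have h : star (g : Matrix (Fin n) (Fin n) ℂ) * (g : Matrix (Fin n) (Fin n) ℂ) = 1 :=
    Matrix.UnitaryGroup.star_mul_self g
  rw [inner_eq, inner_eq]
  show dotProduct (star (Matrix.mulVec _ x)) (Matrix.mulVec _ y) = _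
  rw [Matrix.star_mulVec, Matrix.dotProduct_mulVec, Matrix.vecMul_vecMul,
    ← Matrix.star_eq_conjTranspose, h, Matrix.vecMul_one]

lemma act_norm {n : ℕ} (g : Matrix.unitaryGroup (Fin n) ℂ) (x : Cn n) :
    ‖act (g : Matrix (Fin n) (Fin n) ℂ) x‖ = ‖x‖ := by
  have h1 : (‖act (g : Matrix (Fin n) (Fin n) ℂ) x‖ : ℝ)^2 = ‖x‖^2 := by
    rw [← inner_self_eq_norm_sq (𝕜 := ℂ), ← inner_self_eq_norm_sq (𝕜 := ℂ), act_inner]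
  nlinarith [norm_nonneg (act (g : Matrix (Fin n) (Fin n) ℂ) x), norm_nonneg x]

def onbM {n : ℕ} (b : OrthonormalBasis (Fin n) ℂ (Cn n)) : Matrix (Fin n) (Fin n) ℂ :=
  Matrix.of fun i j => b j i

lemma onbM_eq {n : ℕ} (b : OrthonormalBasis (Fin n) ℂ (Cn n)) :
    onbM b = (EuclideanSpace.basisFun (Fin n) ℂ).toBasis.toMatrix ⇑b := by
  ext i j
  rw [Module.Basis.toMatrix_apply]
  rfl

lemma onbM_unitary {n : ℕ} (b : OrthonormalBasis (Fin n) ℂ (Cn n)) :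
    onbM b ∈ Matrix.unitaryGroup (Fin n) ℂ := by
  rw [onbM_eq]
  exact (EuclideanSpace.basisFun (Fin n) ℂ).toMatrix_orthonormalBasis_mem_unitary b

lemma onbM_mulVec_single {n : ℕ} (b : OrthonormalBasis (Fin n) ℂ (Cn n)) (i : Fin n) :
    Matrix.mulVec (onbM b) (Pi.single i 1) = (b i : Fin n → ℂ) := by
  ext j
  simp [onbM]

lemma star_onbM_mulVec {n : ℕ} (b : OrthonormalBasis (Fin n) ℂ (Cn n)) (i : Fin n) :
    Matrix.mulVec (star (onbM b)) (b i : Fin n → ℂ) = Pi.single i 1 := by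
  rw [← onbM_mulVec_single b i, Matrix.mulVec_mulVec,
    (Matrix.mem_unitaryGroup_iff'.mp (onbM_unitary b)), Matrix.one_mulVec]

lemma exists_su {n : ℕ} (hn : 3 ≤ n) (e v₁ v₂ : Cn n)
    (he : ‖e‖ = 1) (hv₁ : ‖v₁‖ = 1) (hv₂ : ‖v₂‖ = 1)
    (he1 : ⟪e, v₁⟫_ℂ = 0) (he2 : ⟪e, v₂⟫_ℂ = 0) :
    ∃ U : Matrix (Fin n) (Fin n) ℂ, U ∈ Matrix.unitaryGroup (Fin n) ℂ ∧ U.det = 1 ∧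
      Matrix.mulVec U e = (e : Fin n → ℂ) ∧ Matrix.mulVec U v₁ = (v₂ : Fin n → ℂ) := by
  set i0 : Fin n := ⟨0, by omega⟩
  set i1 : Fin n := ⟨1, by omega⟩
  set i2 : Fin n := ⟨2, by omega⟩
  have h01 : i0 ≠ i1 := by simp [i0, i1, Fin.ext_iff]
  have h02 : i0 ≠ i2 := by simp [i0, i2, Fin.ext_iff]
  have h12 : i1 ≠ i2 := by simp [i1, i2, Fin.ext_iff]
  have hcard : Module.finrank ℂ (Cn n) = Fintype.card (Fin n) := by
    simp [finrank_euclideanSpace]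
  -- construct the two orthonormal bases
  have key : ∀ v : Cn n, ‖v‖ = 1 → ⟪e, v⟫_ℂ = 0 →
      ∃ b : OrthonormalBasis (Fin n) ℂ (Cn n), b i0 = e ∧ b i1 = v := by
    intro v hv hev
    have horth : Orthonormal ℂ (Set.restrict {i0, i1} (fun i => if i = i0 then e else v)) := by
      rw [orthonormal_iff_ite]
      have h1 : ⟪e, e⟫_ℂ = 1 := by
        rw [inner_self_eq_norm_sq_to_K, he]; norm_num
      have h2 : ⟪v, v⟫_ℂ = 1 := by
        rw [inner_self_eq_norm_sq_to_K, hv]; norm_num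
      have h3 : ⟪v, e⟫_ℂ = 0 := by
        rw [← inner_conj_symm, hev, map_zero]
      rintro ⟨i, hi⟩ ⟨j, hj⟩
      simp only [Set.mem_insert_iff, Set.mem_singleton_iff] at hi hj
      simp only [Set.restrict_apply, Subtype.mk.injEq]
      rcases hi with rfl | rfl <;> rcases hj with rfl | rfl <;>
        simp [Set.restrict, he, hv, h01, h01.symm, h1, h2, h3, hev]
    obtain ⟨b, hb⟩ := horth.exists_orthonormalBasis_extension_of_card_eq hcard
    exact ⟨b, by simpa using hb i0 (by simp), by simpa [h01.symm] using hb i1 (by simp)⟩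
  obtain ⟨b₁, hb₁0, hb₁1⟩ := key v₁ hv₁ he1
  obtain ⟨b₂, hb₂0, hb₂1⟩ := key v₂ hv₂ he2
  set d₁ := (onbM b₁).det
  set d₂ := (onbM b₂).det
  have hd₁ : d₁ ∈ unitary ℂ := Matrix.det_of_mem_unitary (onbM_unitary b₁)
  have hd₂ : d₂ ∈ unitary ℂ := Matrix.det_of_mem_unitary (onbM_unitary b₂)
  set δ : ℂ := d₁ * star d₂
  have hδ : δ ∈ unitary ℂ := mul_mem hd₁ (Unitary.star_mem hd₂)
  set D : Matrix (Fin n) (Fin n) ℂ := Matrix.diagonal (fun i => if i = i2 then δ else 1)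
  have hD : D ∈ Matrix.unitaryGroup (Fin n) ℂ := by
    rw [Matrix.mem_unitaryGroup_iff']
    show star D * D = 1
    rw [show star D = Matrix.diagonal (fun i => star (if i = i2 then δ else 1)) from ?_]
    · rw [Matrix.diagonal_mul_diagonal,
        show (fun i => star (if i = i2 then δ else 1) * (if i = i2 then δ else 1)) = fun _ : Fin n => (1:ℂ) from
          funext fun i => by by_cases h : i = i2 <;> simp [h, show (starRingEnd ℂ) δ * δ = 1 from Unitary.star_mul_self_of_mem hδ],
        Matrix.diagonal_one]
    · rw [Matrix.star_eq_conjTranspose, Matrix.diagonal_conjTranspose]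
      rfl
  set U : Matrix (Fin n) (Fin n) ℂ := onbM b₂ * D * star (onbM b₁)
  have hUmem : U ∈ Matrix.unitaryGroup (Fin n) ℂ :=
    mul_mem (mul_mem (onbM_unitary b₂) hD) (Unitary.star_mem (onbM_unitary b₁))
  have hmap : ∀ i : Fin n, i ≠ i2 → Matrix.mulVec U (b₁ i) = (b₂ i : Fin n → ℂ) := by
    intro i hi
    have : Matrix.mulVec U (b₁ i) =
        Matrix.mulVec (onbM b₂) (Matrix.mulVec D (Matrix.mulVec (star (onbM b₁)) (b₁ i))) := by
      simp [U, Matrix.mulVec_mulVec, Matrix.mul_assoc]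
    rw [this, star_onbM_mulVec, Matrix.diagonal_mulVec_single, if_neg hi, one_mul,
      onbM_mulVec_single]
  have hdet : U.det = 1 := by
    have hdD : D.det = δ := by
      rw [Matrix.det_diagonal]
      rw [Finset.prod_eq_single i2] <;> simp +contextual
    rw [Matrix.det_mul, Matrix.det_mul, hdD, Matrix.star_eq_conjTranspose,
      Matrix.det_conjTranspose]
    show d₂ * δ * star d₁ = 1
    calc d₂ * (d₁ * star d₂) * star d₁ = (d₂ * star d₂) * (d₁ * star d₁) := by ring
    _ = 1 := by rw [Unitary.mul_star_self_of_mem hd₂, Unitary.mul_star_self_of_mem hd₁, one_mul]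
  refine ⟨U, hUmem, hdet, ?_, ?_⟩
  · have h := hmap i0 h02; rw [hb₁0, hb₂0] at h; exact h
  · have h := hmap i1 h12; rw [hb₁1, hb₂1] at h; exact h

lemma act_add {n : ℕ} (M : Matrix (Fin n) (Fin n) ℂ) (x y : Cn n) :
    act M (x + y) = act M x + act M y := congrArg (WithLp.toLp 2) (Matrix.mulVec_add M x y)

lemma act_smul {n : ℕ} (M : Matrix (Fin n) (Fin n) ℂ) (c : ℂ) (x : Cn n) :
    act M (c • x) = c • act M x := congrArg (WithLp.toLp 2) (Matrix.mulVec_smul M c x)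

lemma rot_trans {n : ℕ} (hn : 3 ≤ n) (e : Cn n) (he : ‖e‖ = 1) (z₁ z₂ : Cn n)
    (h1 : ‖z₁‖ = 1) (h2 : ‖z₂‖ = 1) (hip : ⟪e, z₁⟫_ℂ = ⟪e, z₂⟫_ℂ) :
    ∃ g : Matrix.unitaryGroup (Fin n) ℂ, g ∈ rotGroup (span ℂ {e}) ∧
      act (g : Matrix (Fin n) (Fin n) ℂ) z₁ = z₂ := by
  set a : ℂ := ⟪e, z₁⟫_ℂ with ha
  have hee : ⟪e, e⟫_ℂ = 1 := by rw [inner_self_eq_norm_sq_to_K, he]; norm_num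
  set u₁ : Cn n := z₁ - a • e with hu₁
  set u₂ : Cn n := z₂ - a • e with hu₂
  have horth : ∀ u z, u = z - a • e → ⟪e, z⟫_ℂ = a → ⟪e, u⟫_ℂ = 0 := by
    intro u z hu hz
    rw [hu, inner_sub_right, inner_smul_right, hee, hz, mul_one, sub_self]
  have ho₁ : ⟪e, u₁⟫_ℂ = 0 := horth u₁ z₁ rfl rfl
  have ho₂ : ⟪e, u₂⟫_ℂ = 0 := horth u₂ z₂ rfl hip.symm
  have hnorm : ∀ u z, u = z - a • e → ⟪e, u⟫_ℂ = 0 → ‖z‖ = 1 → ‖u‖^2 = 1 - ‖a • e‖^2 := by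
    intro u z hu ho hz
    have hz' : a • e + u = z := by rw [hu]; abel
    have := norm_add_sq (𝕜 := ℂ) (a • e) u
    rw [hz', hz] at this
    have hin : ⟪a • e, u⟫_ℂ = 0 := by rw [inner_smul_left, ho, mul_zero]
    rw [hin] at this
    simp at this
    linarith
  have hn₁ := hnorm u₁ z₁ rfl ho₁ h1
  have hn₂ := hnorm u₂ z₂ rfl ho₂ h2
  have hs : ‖u₂‖ = ‖u₁‖ := by
    have := hn₁.trans hn₂.symm
    nlinarith [norm_nonneg u₁, norm_nonneg u₂]
  by_cases hz : ‖u₁‖ = 0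
  · refine ⟨1, ⟨by simp, fun x _ => by
      show (WithLp.toLp 2 (Matrix.mulVec 1 x) : Cn n) = x
      rw [Matrix.one_mulVec]⟩, ?_⟩
    have h1' : u₁ = 0 := norm_eq_zero.mp hz
    have h2' : u₂ = 0 := norm_eq_zero.mp (by rw [hs, hz])
    have : z₁ = z₂ := by
      have e1 : z₁ = a • e := by rw [← sub_eq_zero]; exact h1'
      have e2 : z₂ = a • e := by rw [← sub_eq_zero]; exact h2'
      rw [e1, e2]
    rw [← this]
    show (WithLp.toLp 2 (Matrix.mulVec 1 z₁) : Cn n) = z₁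
    rw [Matrix.one_mulVec]
  · set s : ℝ := ‖u₁‖
    have hspos : 0 < s := lt_of_le_of_ne (norm_nonneg _) (Ne.symm hz)
    set v₁ : Cn n := (s : ℂ)⁻¹ • u₁
    set v₂ : Cn n := (s : ℂ)⁻¹ • u₂
    have hsc : ‖((s : ℂ))⁻¹‖ = s⁻¹ := by
      rw [norm_inv, Complex.norm_real, Real.norm_eq_abs, abs_of_pos hspos]
    have hv₁ : ‖v₁‖ = 1 := by
      rw [norm_smul, hsc]; field_simp; rfl
    have hv₂ : ‖v₂‖ = 1 := by
      rw [norm_smul, hsc, hs]; field_simp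
    have hev₁ : ⟪e, v₁⟫_ℂ = 0 := by rw [inner_smul_right, ho₁, mul_zero]
    have hev₂ : ⟪e, v₂⟫_ℂ = 0 := by rw [inner_smul_right, ho₂, mul_zero]
    obtain ⟨U, hU, hdet, hUe, hUv⟩ := exists_su hn e v₁ v₂ he hv₁ hv₂ hev₁ hev₂
    refine ⟨⟨U, hU⟩, ⟨hdet, ?_⟩, ?_⟩
    · intro x hx
      obtain ⟨c, rfl⟩ := mem_span_singleton.mp hx
      show act U (c • e) = c • e
      rw [act_smul]
      show c • (WithLp.toLp 2 (Matrix.mulVec U e) : Cn n) = c • e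
      rw [show (WithLp.toLp 2 (Matrix.mulVec U e) : Cn n) = e from congrArg (WithLp.toLp 2) hUe]
    · have hz₁ : z₁ = a • e + (s:ℂ) • v₁ := by
        rw [smul_smul]
        rw [mul_inv_cancel₀ (show (s:ℂ) ≠ 0 by exact_mod_cast hspos.ne'), one_smul, hu₁]; abel
      have hz₂ : z₂ = a • e + (s:ℂ) • v₂ := by
        rw [smul_smul]
        rw [mul_inv_cancel₀ (show (s:ℂ) ≠ 0 by exact_mod_cast hspos.ne'), one_smul, hu₂]; abel
      rw [hz₁, hz₂]
      show act U (a • e + (s:ℂ) • v₁) = a • e + (s:ℂ) • v₂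
      rw [act_add, act_smul, act_smul, show act U e = e from congrArg (WithLp.toLp 2) hUe,
        show act U v₁ = v₂ from congrArg (WithLp.toLp 2) hUv]

lemma exists_unit_span {n : ℕ} (L : Submodule ℂ (Cn n)) (hL : Module.finrank ℂ L = 1) :
    ∃ e : Cn n, ‖e‖ = 1 ∧ L = span ℂ {e} := by
  have hbot : L ≠ ⊥ := by
    intro h
    rw [h] at hL
    simp [finrank_bot] at hL
  obtain ⟨v, hvL, hv0⟩ := Submodule.exists_mem_ne_zero_of_ne_bot hbot
  have hsp : span ℂ {v} = L := by
    apply eq_of_le_of_finrank_le ((span_singleton_le_iff_mem v L).mpr hvL)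
    rw [hL, finrank_span_singleton hv0]
  refine ⟨(‖v‖ : ℂ)⁻¹ • v, ?_, ?_⟩
  · rw [norm_smul, norm_inv, Complex.norm_real, Real.norm_eq_abs,
      abs_of_pos (norm_pos_iff.mpr hv0)]
    exact inv_mul_cancel₀ (norm_ne_zero_iff.mpr hv0)
  · rw [← hsp]
    exact (span_singleton_smul_eq (by
      simp [isUnit_iff_ne_zero, norm_eq_zero, hv0] : IsUnit ((‖v‖ : ℂ)⁻¹)) v).symm

lemma exists_perp_two {n : ℕ} (hn : 3 ≤ n) (e p : Cn n) :
    ∃ u : Cn n, ‖u‖ = 1 ∧ ⟪e, u⟫_ℂ = 0 ∧ ⟪p, u⟫_ℂ = 0 := by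
  classical
  set K : Submodule ℂ (Cn n) := span ℂ {e, p}
  have hK : Module.finrank ℂ K ≤ 2 := by
    have h := finrank_span_le_card (R := ℂ) ({e, p} : Set (Cn n))
    have h2 : ({e, p} : Set (Cn n)).toFinset.card ≤ 2 := by
      rw [Set.toFinset_insert, Set.toFinset_singleton]
      exact (Finset.card_insert_le _ _).trans (by simp)
    exact h.trans h2
  have hne : Kᗮ ≠ ⊥ := by
    intro h
    have hKtop : K = ⊤ := Submodule.orthogonal_eq_bot_iff.mp h
    rw [hKtop] at hK
    have : Module.finrank ℂ (⊤ : Submodule ℂ (Cn n)) = n := by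
      rw [finrank_top, finrank_euclideanSpace]; simp
    omega
  obtain ⟨w, hwK, hw0⟩ := Submodule.exists_mem_ne_zero_of_ne_bot hne
  refine ⟨(‖w‖ : ℂ)⁻¹ • w, ?_, ?_, ?_⟩
  · rw [norm_smul, norm_inv, Complex.norm_real, Real.norm_eq_abs,
      abs_of_pos (norm_pos_iff.mpr hw0)]
    exact inv_mul_cancel₀ (norm_ne_zero_iff.mpr hw0)
  · rw [Submodule.mem_orthogonal] at hwK
    rw [inner_smul_right, hwK e (subset_span (by simp)), mul_zero]
  · rw [Submodule.mem_orthogonal] at hwK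
    rw [inner_smul_right, hwK p (subset_span (by simp)), mul_zero]

lemma norm_sq_orth {n : ℕ} (w₁ w₂ : Cn n) (h : ⟪w₁, w₂⟫_ℂ = 0) :
    ‖w₁ + w₂‖^2 = ‖w₁‖^2 + ‖w₂‖^2 := by
  have := norm_add_sq (𝕜 := ℂ) w₁ w₂
  rw [h] at this
  simpa using this

lemma act_cont {n : ℕ} (e x : Cn n) :
    Continuous (fun g : Matrix.unitaryGroup (Fin n) ℂ =>
      (⟪e, act (g : Matrix (Fin n) (Fin n) ℂ) x⟫_ℂ).re) := by
  have heq : (fun g : Matrix.unitaryGroup (Fin n) ℂ =>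
      (⟪e, act (g : Matrix (Fin n) (Fin n) ℂ) x⟫_ℂ).re) =
      fun g : Matrix.unitaryGroup (Fin n) ℂ => (∑ i, (starRingEnd ℂ) (e i) *
        (∑ j, (g : Matrix (Fin n) (Fin n) ℂ) i j * x j)).re := by
    funext g
    rw [inner_eq]
    rfl
  rw [heq]
  apply Complex.continuous_re.comp
  apply continuous_finset_sum
  intro i _
  apply Continuous.mul continuous_const
  apply continuous_finset_sum
  intro j _
  apply Continuous.mul _ continuous_const
  have h1 : Continuous (fun M : Matrix (Fin n) (Fin n) ℂ => M i j) :=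
    (continuous_apply j).comp (continuous_apply i)
  exact h1.comp continuous_subtype_val

lemma act_mul {n : ℕ} (A B : Matrix (Fin n) (Fin n) ℂ) (x : Cn n) :
    act (A * B) x = act A (act B x) := congrArg (WithLp.toLp 2) (Matrix.mulVec_mulVec x.ofLp A B).symm

lemma conj_mul_self (z : ℂ) : (starRingEnd ℂ) z * z = ((‖z‖^2 : ℝ) : ℂ) := by
  rw [mul_comm, Complex.mul_conj, Complex.normSq_eq_norm_sq]

lemma r_eq_one_of_sq {r : ℝ} (h0 : 0 ≤ r) (h : r^2 = 1) : r = 1 := by nlinarith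
lemma r_eq_of_sq {r b : ℝ} (h0 : 0 ≤ r) (hb : 0 ≤ b) (h : r^2 = b^2) : r = b := by nlinarith
lemma r_le_of_sq {b t : ℝ} (hb : 0 ≤ b) (ht : 0 ≤ t) (h : b^2 ≤ t^2) : b ≤ t := by nlinarith
lemma r_eq_zero_of_sq {r : ℝ} (h : r^2 = 0) : r = 0 := by nlinarith [sq_nonneg r]
lemma mul_sq_le {x y : ℝ} (h0 : 0 ≤ x) (h1 : x ≤ 1) (hy : 0 ≤ y) : (x*y)^2 ≤ y^2 := by
  have h2 : x^2 ≤ 1 := by nlinarith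
  nlinarith [sq_nonneg y, h2]
lemma improve_arith {M B t A : ℝ} (hMlt : M < 1) (hBpos : 0 < B) (htB : B ≤ t)
    (hA : A = 1 - B^2) : M < A * M + t * B := by
  have h1 : B*B*M < B*B := by
    have := mul_lt_mul_of_pos_left hMlt (mul_pos hBpos hBpos)
    linarith
  have h2 : B*B ≤ t*B := mul_le_mul_of_nonneg_right htB hBpos.le
  nlinarith [h1, h2]

set_option maxHeartbeats 1000000 in
lemma improve {n : ℕ} (hn : 3 ≤ n) (e f z₀ : Cn n) (he : ‖e‖ = 1) (hf : ‖f‖ = 1)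
    (hz₀n : ‖z₀‖ = 1) (hef : f ∉ span ℂ {e}) (hMlt : (⟪e, z₀⟫_ℂ).re < 1) :
    ∃ g₁ g₂ : Matrix.unitaryGroup (Fin n) ℂ, g₁ ∈ rotGroup (span ℂ {e}) ∧
      g₂ ∈ rotGroup (span ℂ {f}) ∧
      (⟪e, z₀⟫_ℂ).re <
        (⟪e, act (g₂ : Matrix (Fin n) (Fin n) ℂ)
          (act (g₁ : Matrix (Fin n) (Fin n) ℂ) z₀)⟫_ℂ).re := by
  have hee : ⟪e, e⟫_ℂ = 1 := by rw [inner_self_eq_norm_sq_to_K, he]; norm_num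
  have hff : ⟪f, f⟫_ℂ = 1 := by rw [inner_self_eq_norm_sq_to_K, hf]; norm_num
  set a : ℂ := ⟪e, z₀⟫_ℂ with hadef
  clear_value a
  set M : ℝ := a.re with hMdef
  clear_value M
  have hanorm : ‖a‖ ≤ 1 := by
    have := norm_inner_le_norm (𝕜 := ℂ) e z₀
    rwa [he, hz₀n, one_mul, ← hadef] at this
  -- setup for the axis f
  set α : ℂ := ⟪e, f⟫_ℂ with hαdef
  clear_value α
  set p : Cn n := f - α • e with hpdef
  clear_value p
  have hep : ⟪e, p⟫_ℂ = 0 := by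
    rw [hpdef, inner_sub_right, inner_smul_right, hee, mul_one, ← hαdef, sub_self]
  have hfeq : α • e + p = f := by rw [hpdef]; abel
  have hp0 : p ≠ 0 := by
    intro h
    apply hef
    rw [mem_span_singleton]
    refine ⟨α, ?_⟩
    rw [← hfeq, h, add_zero]
  set B : ℝ := ‖p‖ with hBdef
  clear_value B
  have hBpos : 0 < B := hBdef ▸ norm_pos_iff.mpr hp0
  have hAB : ‖α‖^2 + B^2 = 1 := by
    have horth : ⟪α • e, p⟫_ℂ = 0 := by rw [inner_smul_left, hep, mul_zero]
    have hns := norm_sq_orth (α • e) p horth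
    rw [hfeq, hf, norm_smul, he, mul_one, ← hBdef] at hns
    rw [← hns]; norm_num
  -- decomposition of z₀
  set u : Cn n := z₀ - a • e with hudef
  clear_value u
  have heu : ⟪e, u⟫_ℂ = 0 := by
    rw [hudef, inner_sub_right, inner_smul_right, hee, mul_one, ← hadef, sub_self]
  have hzeq : a • e + u = z₀ := by rw [hudef]; abel
  set s : ℝ := ‖u‖ with hsdef
  clear_value s
  have hsnn : 0 ≤ s := hsdef ▸ norm_nonneg u
  -- pick u' perpendicular to e and p
  obtain ⟨u', hu'n, heu', hpu'⟩ := exists_perp_two hn e p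
  -- the intermediate point z₁
  set z₁ : Cn n := a • e + (s : ℂ) • u' with hz₁def
  clear_value z₁
  have horth₁ : ⟪a • e, (s : ℂ) • u'⟫_ℂ = 0 := by
    rw [inner_smul_left, inner_smul_right, heu', mul_zero, mul_zero]
  have hz₁n : ‖z₁‖ = 1 := by
    have hns := norm_sq_orth (a • e) ((s : ℂ) • u') horth₁
    have hns0 := norm_sq_orth (a • e) u (by rw [inner_smul_left, heu, mul_zero])
    rw [hzeq, hz₀n] at hns0
    rw [← hz₁def, norm_smul, norm_smul, he, mul_one, hu'n, mul_one, Complex.norm_real,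
      Real.norm_eq_abs, abs_of_nonneg hsnn] at hns
    rw [norm_smul, he, mul_one, ← hsdef] at hns0
    have h1 : ‖z₁‖^2 = 1 := by rw [hns, ← hns0]; norm_num
    exact r_eq_one_of_sq (norm_nonneg z₁) h1
  have hez₁ : ⟪e, z₁⟫_ℂ = a := by
    rw [hz₁def, inner_add_right, inner_smul_right, inner_smul_right, hee, heu',
      mul_one, mul_zero, add_zero]
  obtain ⟨g₁, hg₁rot, hg₁act⟩ := rot_trans hn e he z₀ z₁ hz₀n hz₁n (by rw [hez₁, hadef])
  -- inner products with f
  have hfe : ⟪f, e⟫_ℂ = (starRingEnd ℂ) α := by rw [← inner_conj_symm, hαdef]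
  have hfu' : ⟪f, u'⟫_ℂ = 0 := by
    rw [← hfeq, inner_add_left, inner_smul_left, heu', hpu', mul_zero, add_zero]
  have hfz₁ : ⟪f, z₁⟫_ℂ = a * (starRingEnd ℂ) α := by
    rw [hz₁def, inner_add_right, inner_smul_right, inner_smul_right, hfe, hfu',
      mul_zero, add_zero]
  set c : ℂ := a * (starRingEnd ℂ) α with hcdef
  clear_value c
  have hcnorm : ‖c‖^2 ≤ ‖α‖^2 := by
    rw [hcdef, norm_mul, RCLike.norm_conj]
    exact mul_sq_le (norm_nonneg a) hanorm (norm_nonneg α)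
  -- the vector q and v
  set q : Cn n := e - (starRingEnd ℂ) α • f with hqdef
  clear_value q
  have hfq : ⟪f, q⟫_ℂ = 0 := by
    rw [hqdef, inner_sub_right, inner_smul_right, hff, mul_one, hfe, sub_self]
  have heq2 : ⟪e, q⟫_ℂ = ((B^2 : ℝ) : ℂ) := by
    rw [hqdef, inner_sub_right, inner_smul_right, hee, ← hαdef, conj_mul_self α,
      show (B^2 : ℝ) = 1 - ‖α‖^2 by linarith [hAB]]
    push_cast
    ring
  have hqq : ⟪q, q⟫_ℂ = ((B^2 : ℝ) : ℂ) := by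
    rw [hqdef, inner_sub_left, inner_smul_left, ← hqdef, heq2, hfq, mul_zero, sub_zero]
  have hqn : ‖q‖ = B := by
    have h1 : (‖q‖^2 : ℝ) = B^2 := by
      have h := inner_self_eq_norm_sq_to_K (𝕜 := ℂ) q
      rw [hqq] at h
      have h2 := congrArg Complex.re h
      simpa [← Complex.ofReal_pow] using h2.symm
    exact r_eq_of_sq (norm_nonneg q) hBpos.le h1
  set v : Cn n := ((B : ℂ))⁻¹ • q with hvdef
  clear_value v
  have hBne : (B : ℂ) ≠ 0 := by exact_mod_cast hBpos.ne'
  have hvn : ‖v‖ = 1 := by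
    rw [hvdef, norm_smul, norm_inv, Complex.norm_real, Real.norm_eq_abs,
      abs_of_pos hBpos, hqn]
    field_simp
  have hfv : ⟪f, v⟫_ℂ = 0 := by rw [hvdef, inner_smul_right, hfq, mul_zero]
  have hev : ⟪e, v⟫_ℂ = ((B : ℝ) : ℂ) := by
    rw [hvdef, inner_smul_right, heq2]
    rw [show ((B^2 : ℝ) : ℂ) = (B : ℂ) * (B : ℂ) by push_cast; ring]
    rw [inv_mul_cancel_left₀ hBne]
  -- the improved point z₂
  set t : ℝ := Real.sqrt (1 - ‖c‖^2) with htdef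
  clear_value t
  have hc1 : ‖c‖^2 ≤ 1 := le_trans hcnorm (by linarith [sq_nonneg B])
  have ht2 : t^2 = 1 - ‖c‖^2 := by rw [htdef]; exact Real.sq_sqrt (by linarith)
  have htnn : 0 ≤ t := htdef ▸ Real.sqrt_nonneg _
  have htB : B ≤ t := by
    have h2 : B^2 ≤ t^2 := by linarith
    exact r_le_of_sq hBpos.le htnn h2
  set z₂ : Cn n := c • f + (t : ℂ) • v with hz₂def
  clear_value z₂
  have horth₂ : ⟪c • f, (t : ℂ) • v⟫_ℂ = 0 := by
    rw [inner_smul_left, inner_smul_right, hfv, mul_zero, mul_zero]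
  have hz₂n : ‖z₂‖ = 1 := by
    have hns := norm_sq_orth (c • f) ((t : ℂ) • v) horth₂
    rw [← hz₂def, norm_smul, norm_smul, hf, mul_one, hvn, mul_one,
      Complex.norm_real, Real.norm_eq_abs, abs_of_nonneg htnn] at hns
    have h1 : ‖z₂‖^2 = 1 := by rw [hns]; linarith
    exact r_eq_one_of_sq (norm_nonneg z₂) h1
  have hfz₂ : ⟪f, z₂⟫_ℂ = c := by
    rw [hz₂def, inner_add_right, inner_smul_right, inner_smul_right, hff, hfv,
      mul_one, mul_zero, add_zero]
  obtain ⟨g₂, hg₂rot, hg₂act⟩ := rot_trans hn f hf z₁ z₂ hz₁n hz₂n (by rw [hfz₁, hfz₂])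
  refine ⟨g₁, g₂, hg₁rot, hg₂rot, ?_⟩
  rw [hg₁act, hg₂act]
  have hca : c * α = ((‖α‖^2 : ℝ) : ℂ) * a := by
    rw [hcdef, mul_assoc, conj_mul_self α]
    ring
  have hval : (⟪e, z₂⟫_ℂ).re = ‖α‖^2 * M + t * B := by
    rw [hz₂def, inner_add_right, inner_smul_right, inner_smul_right, hev,
      ← hαdef, hca, Complex.add_re, ← Complex.ofReal_mul, Complex.ofReal_re, hMdef]
    simp [← Complex.ofReal_pow, Complex.mul_re, Complex.ofReal_re, Complex.ofReal_im]
  rw [hval]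
  exact improve_arith hMlt hBpos htB (by linarith)

lemma orbit_to_e {n : ℕ} (hn : 3 ≤ n) (e f : Cn n) (he : ‖e‖ = 1) (hf : ‖f‖ = 1)
    (hef : f ∉ span ℂ {e})
    (G : Subgroup (Matrix.unitaryGroup (Fin n) ℂ))
    (hcomp : IsCompact (G : Set (Matrix.unitaryGroup (Fin n) ℂ)))
    (hG₁ : rotGroup (span ℂ {e}) ⊆ (G : Set (Matrix.unitaryGroup (Fin n) ℂ)))
    (hG₂ : rotGroup (span ℂ {f}) ⊆ (G : Set (Matrix.unitaryGroup (Fin n) ℂ))) :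
    ∀ x : Cn n, ‖x‖ = 1 → ∃ g ∈ G, act (g : Matrix (Fin n) (Fin n) ℂ) x = e := by
  intro x hx
  obtain ⟨g₀, hg₀G, hmax⟩ := hcomp.exists_isMaxOn ⟨1, G.one_mem⟩ ((act_cont e x).continuousOn)
  set z₀ : Cn n := act (g₀ : Matrix (Fin n) (Fin n) ℂ) x with hz₀def
  clear_value z₀
  have hz₀n : ‖z₀‖ = 1 := by rw [hz₀def, act_norm g₀ x, hx]
  have hM1 : (⟪e, z₀⟫_ℂ).re = 1 := by
    by_contra hM
    have hMle : (⟪e, z₀⟫_ℂ).re ≤ 1 := by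
      have h1 := norm_inner_le_norm (𝕜 := ℂ) e z₀
      rw [he, hz₀n, one_mul] at h1
      calc (⟪e, z₀⟫_ℂ).re ≤ ‖⟪e, z₀⟫_ℂ‖ := Complex.re_le_norm _
      _ = ‖⟪e, z₀⟫_ℂ‖ := rfl
      _ ≤ 1 := h1
    have hMlt : (⟪e, z₀⟫_ℂ).re < 1 := lt_of_le_of_ne hMle hM
    obtain ⟨g₁, g₂, hg₁rot, hg₂rot, himp⟩ := improve hn e f z₀ he hf hz₀n hef hMlt
    have hgtG : g₂ * g₁ * g₀ ∈ G := mul_mem (mul_mem (hG₂ hg₂rot) (hG₁ hg₁rot)) hg₀G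
    have hgtact : act ((g₂ * g₁ * g₀ : Matrix.unitaryGroup (Fin n) ℂ) :
        Matrix (Fin n) (Fin n) ℂ) x =
        act (g₂ : Matrix (Fin n) (Fin n) ℂ) (act (g₁ : Matrix (Fin n) (Fin n) ℂ) z₀) := by
      rw [Matrix.UnitaryGroup.mul_val, act_mul, Matrix.UnitaryGroup.mul_val, act_mul, ← hz₀def]
    have hle' := isMaxOn_iff.mp hmax (g₂ * g₁ * g₀) hgtG
    rw [hgtact, ← hz₀def] at hle'
    exact absurd hle' (not_le.mpr himp)
  have hz₀e : z₀ = e := by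
    have h1 : ‖e - z₀‖^2 = 0 := by
      have h2 := norm_sub_sq (𝕜 := ℂ) e z₀
      rw [he, hz₀n] at h2
      have hre : RCLike.re ⟪e, z₀⟫_ℂ = (⟪e, z₀⟫_ℂ).re := rfl
      rw [hre, hM1] at h2
      rw [h2]; norm_num
    have h3 := norm_eq_zero.mp (r_eq_zero_of_sq h1)
    rw [sub_eq_zero] at h3
    exact h3.symm
  exact ⟨g₀, hg₀G, by rw [← hz₀def, hz₀e]⟩

lemma act_one {n : ℕ} (x : Cn n) : act (1 : Matrix (Fin n) (Fin n) ℂ) x = x :=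
  congrArg (WithLp.toLp 2) (Matrix.one_mulVec x.ofLp)

/-- Any compact subgroup of `SU(n)`, `n ≥ 3`, containing the complex rotation groups
around two distinct complex lines acts transitively on the unit sphere `S^{2n-1}`. -/
theorem stmt4 {n : ℕ} (hn : 3 ≤ n)
    (L₁ L₂ : Submodule ℂ (Cn n))
    (h₁ : Module.finrank ℂ L₁ = 1) (h₂ : Module.finrank ℂ L₂ = 1) (hne : L₁ ≠ L₂)
    (G : Subgroup (Matrix.unitaryGroup (Fin n) ℂ))
    (hSU : ∀ g ∈ G, (g : Matrix (Fin n) (Fin n) ℂ).det = 1)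
    (hcomp : IsCompact (G : Set (Matrix.unitaryGroup (Fin n) ℂ)))
    (hG₁ : rotGroup L₁ ⊆ (G : Set (Matrix.unitaryGroup (Fin n) ℂ)))
    (hG₂ : rotGroup L₂ ⊆ (G : Set (Matrix.unitaryGroup (Fin n) ℂ))) :
    ∀ x y : Cn n, ‖x‖ = 1 → ‖y‖ = 1 →
      ∃ g ∈ G, (WithLp.toLp 2 (Matrix.mulVec (g : Matrix (Fin n) (Fin n) ℂ) x) : Cn n) = y := by
  obtain ⟨e, he, hLe⟩ := exists_unit_span L₁ h₁
  obtain ⟨f, hfn, hLf⟩ := exists_unit_span L₂ h₂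
  have hef : f ∉ span ℂ {e} := by
    intro hmem
    apply hne
    have hfL₁ : f ∈ L₁ := by rw [hLe]; exact hmem
    have h2' : L₂ ≤ L₁ := by
      rw [hLf]
      exact (span_singleton_le_iff_mem f L₁).mpr hfL₁
    exact (eq_of_le_of_finrank_le h2' (le_of_eq (h₁.trans h₂.symm))).symm
  have horb := orbit_to_e hn e f he hfn hef G hcomp
    (by rw [← hLe]; exact hG₁) (by rw [← hLf]; exact hG₂)
  intro x y hx hy
  obtain ⟨gx, hgxG, hgx⟩ := horb x hx
  obtain ⟨gy, hgyG, hgy⟩ := horb y hy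
  refine ⟨gy⁻¹ * gx, mul_mem (inv_mem hgyG) hgxG, ?_⟩
  show act ((gy⁻¹ * gx : Matrix.unitaryGroup (Fin n) ℂ) : Matrix (Fin n) (Fin n) ℂ) x = y
  rw [Matrix.UnitaryGroup.mul_val, act_mul, hgx, ← hgy, ← act_mul,
    ← Matrix.UnitaryGroup.mul_val, inv_mul_cancel, Matrix.UnitaryGroup.one_val, act_one]
end
end

section
/- Let K ⊆ C^n, n ≥ 3, be a complex body of revolution with axis L and hyperplane of revolution H = L^⊥. Then for every complex hyperplane Γ through the origin, Γ ∩ K is a C-linear body of revolution; moreover, either Γ = H or Γ ∩ H is a hyperplane of revolution of Γ ∩ K. -/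
open Metric Submodule Pointwise

noncomputable section

def IsBodyOfRev {E : Type*} [NormedAddCommGroup E] [InnerProductSpace ℂ E]
    (K : Set E) (L : Submodule ℂ E) : Prop :=
  CSymmetric K ∧ IsConvexBody K ∧ Module.finrank ℂ L = 1 ∧
  ∀ v ∈ L, ({x | x - v ∈ Lᗮ} ∩ K = ∅) ∨ (∃ p, {x | x - v ∈ Lᗮ} ∩ K = {p}) ∨
    (∃ r > (0:ℝ), {x | x - v ∈ Lᗮ} ∩ K = {x | x - v ∈ Lᗮ ∧ ‖x - v‖ ≤ r})

def IsCLinearBodyOfRevAx {E : Type*} [NormedAddCommGroup E] [InnerProductSpace ℂ E]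
    (K : Set E) (Lax H : Submodule ℂ E) : Prop :=
  ∃ (f : E ≃L[ℂ] E) (K₀ : Set E) (L₀ : Submodule ℂ E),
    IsBodyOfRev K₀ L₀ ∧ K = f '' K₀ ∧
    Lax = L₀.map ((f : E →L[ℂ] E) : E →ₗ[ℂ] E) ∧ H = L₀ᗮ.map ((f : E →L[ℂ] E) : E →ₗ[ℂ] E)

def IsCLinearBodyOfRevHyp {E : Type*} [NormedAddCommGroup E] [InnerProductSpace ℂ E]
    (K : Set E) (H : Submodule ℂ E) : Prop :=
  ∃ Lax, IsCLinearBodyOfRevAx K Lax H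

def IsCLinearBodyOfRev {E : Type*} [NormedAddCommGroup E] [InnerProductSpace ℂ E]
    (K : Set E) : Prop :=
  ∃ Lax H, IsCLinearBodyOfRevAx K Lax H

local notation "⟪" x ", " y "⟫" => @inner ℂ _ _ x y

variable {E : Type*} [NormedAddCommGroup E] [InnerProductSpace ℂ E]

lemma pyth {A B : E} (h : ⟪A, B⟫ = 0) : ‖A + B‖ ^ 2 = ‖A‖ ^ 2 + ‖B‖ ^ 2 := by
  rw [norm_add_sq (𝕜 := ℂ), h]; simp

lemma exists_unit_span_s5 [FiniteDimensional ℂ E] {W : Submodule ℂ E}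
    (hW : Module.finrank ℂ W = 1) : ∃ u : E, ‖u‖ = 1 ∧ W = Submodule.span ℂ {u} := by
  have hbot : W ≠ ⊥ := by
    intro h
    rw [h, finrank_bot] at hW
    omega
  obtain ⟨x, hxW, hx0⟩ := Submodule.exists_mem_ne_zero_of_ne_bot hbot
  have hn : (‖x‖ : ℂ) ≠ 0 := by
    simpa using norm_ne_zero_iff.mpr hx0
  have hne : (‖x‖ : ℂ)⁻¹ • x ≠ 0 := smul_ne_zero (inv_ne_zero hn) hx0
  refine ⟨(‖x‖ : ℂ)⁻¹ • x, ?_, ?_⟩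
  · rw [norm_smul, norm_inv, Complex.norm_real, Real.norm_eq_abs, abs_norm]
    exact inv_mul_cancel₀ (norm_ne_zero_iff.mpr hx0)
  · have hle : Submodule.span ℂ {(‖x‖ : ℂ)⁻¹ • x} ≤ W := by
      rw [Submodule.span_singleton_le_iff_mem]
      exact W.smul_mem _ hxW
    exact (Submodule.eq_of_le_of_finrank_eq hle
      (by rw [finrank_span_singleton hne, hW])).symm

lemma zero_mem_interior {K : Set E} (hs : CSymmetric K) (hb : IsConvexBody K) :
    0 ∈ interior K := by
  obtain ⟨p, hp⟩ := hb.2.2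
  have hneg : -p ∈ interior K := by
    have h := hs (-1) (by norm_num)
    have h2 : -p ∈ (-1 : ℂ) • interior K := ⟨p, hp, by simp⟩
    rwa [← interior_smul₀ (by norm_num : (-1:ℂ) ≠ 0) K, h] at h2
  have hconv := hb.2.1.interior
  have h0 : (0 : E) = (1/2 : ℝ) • p + (1/2 : ℝ) • (-p) := by
    rw [smul_neg, add_neg_cancel]
  rw [h0]
  exact hconv hp hneg (by norm_num) (by norm_num) (by norm_num)

lemma isBodyOfRev_closedBall [FiniteDimensional ℂ E] {L₀ : Submodule ℂ E}
    (hL : Module.finrank ℂ L₀ = 1) {r : ℝ} (hr : 0 < r) :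
    IsBodyOfRev (Metric.closedBall (0:E) r) L₀ := by
  haveI : ProperSpace E := FiniteDimensional.proper ℂ E
  refine ⟨?_, ⟨isCompact_closedBall 0 r, convex_closedBall 0 r,
    (Metric.nonempty_ball.mpr hr).mono Metric.ball_subset_interior_closedBall⟩, hL, ?_⟩
  · intro c hc
    have hc0 : c ≠ 0 := by intro h; rw [h] at hc; simp at hc
    ext x
    rw [Set.mem_smul_set_iff_inv_smul_mem₀ hc0]
    simp [mem_closedBall_zero_iff, norm_smul, norm_inv, hc]
  · intro v hv
    have key : ∀ x : E, x - v ∈ L₀ᗮ → ‖x‖^2 = ‖v‖^2 + ‖x - v‖^2 := by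
      intro x hx
      have h0 : ⟪v, x - v⟫ = 0 := hx v hv
      calc ‖x‖^2 = ‖v + (x - v)‖^2 := by rw [add_sub_cancel]
      _ = _ := pyth h0
    rcases lt_trichotomy ‖v‖ r with h | h | h
    · right; right
      refine ⟨Real.sqrt (r^2 - ‖v‖^2), Real.sqrt_pos.mpr (by nlinarith [norm_nonneg v]), ?_⟩
      ext x
      simp only [Set.mem_inter_iff, Set.mem_setOf_eq, mem_closedBall_zero_iff]
      constructor
      · rintro ⟨h1, h2⟩
        refine ⟨h1, ?_⟩
        have hk := key x h1
        have hx2 : ‖x - v‖^2 ≤ r^2 - ‖v‖^2 := by nlinarith [norm_nonneg x]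
        calc ‖x - v‖ = Real.sqrt (‖x-v‖^2) := (Real.sqrt_sq (norm_nonneg _)).symm
        _ ≤ _ := Real.sqrt_le_sqrt hx2
      · rintro ⟨h1, h2⟩
        refine ⟨h1, ?_⟩
        have hk := key x h1
        have hs2 : ‖x - v‖^2 ≤ r^2 - ‖v‖^2 := by
          have h3 := Real.sq_sqrt (show (0:ℝ) ≤ r^2 - ‖v‖^2 by nlinarith [norm_nonneg v])
          nlinarith [norm_nonneg (x - v), Real.sqrt_nonneg (r^2 - ‖v‖^2)]
        nlinarith [norm_nonneg x]
    · right; left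
      refine ⟨v, ?_⟩
      ext x
      simp only [Set.mem_inter_iff, Set.mem_setOf_eq, mem_closedBall_zero_iff,
        Set.mem_singleton_iff]
      constructor
      · rintro ⟨h1, h2⟩
        have hk := key x h1
        have h3 : ‖x - v‖ = 0 := by nlinarith [norm_nonneg (x-v), norm_nonneg x]
        have := norm_eq_zero.mp h3
        rwa [sub_eq_zero] at this
      · rintro rfl
        exact ⟨by simpa using Submodule.zero_mem L₀ᗮ, by rw [h]⟩
    · left
      ext x
      simp only [Set.mem_inter_iff, Set.mem_setOf_eq, mem_closedBall_zero_iff,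
        Set.mem_empty_iff_false, iff_false, not_and]
      intro h1 h2
      have hk := key x h1
      nlinarith [norm_nonneg (x - v), norm_nonneg x]

set_option maxHeartbeats 1000000 in
theorem stmt5_aux {E : Type*} [NormedAddCommGroup E] [InnerProductSpace ℂ E]
    [FiniteDimensional ℂ E]
    (hn : 3 ≤ Module.finrank ℂ E) (K : Set E) (L : Submodule ℂ E)
    (hK : IsBodyOfRev K L)
    (Γ : Submodule ℂ E) (hΓ : Module.finrank ℂ Γ = Module.finrank ℂ E - 1) :
    (IsCLinearBodyOfRev ((↑) ⁻¹' K : Set ↥Γ)) ∧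
      (Γ = Lᗮ ∨
        IsCLinearBodyOfRevHyp ((↑) ⁻¹' K : Set ↥Γ) (Lᗮ.comap Γ.subtype)) := by
  obtain ⟨hCsym, hCB, hLrk, hslice⟩ := hK
  set KG : Set ↥Γ := Subtype.val ⁻¹' K with hKGdef
  have h0 : (0 : E) ∈ interior K := zero_mem_interior hCsym hCB
  obtain ⟨u, hu, hLu⟩ := exists_unit_span_s5 hLrk
  have huL : u ∈ L := by rw [hLu]; exact Submodule.mem_span_singleton_self u
  have frΓo : Module.finrank ℂ Γᗮ = 1 := by
    have := Submodule.finrank_add_finrank_orthogonal Γ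
    rw [hΓ] at this
    omega
  obtain ⟨w, hw, hΓw⟩ := exists_unit_span_s5 frΓo
  have hΓeq : Γ = (Submodule.span ℂ {w})ᗮ := by
    rw [← hΓw, Submodule.orthogonal_orthogonal]
  have hΓmem : ∀ x : E, x ∈ Γ ↔ ⟪w, x⟫ = 0 := fun x => by
    rw [hΓeq]
    exact Submodule.mem_orthogonal_singleton_iff_inner_right
  have hww : ⟪w, w⟫ = 1 := by
    rw [inner_self_eq_norm_sq_to_K, hw]; norm_num
  have huu : ⟪u, u⟫ = 1 := by
    rw [inner_self_eq_norm_sq_to_K, hu]; norm_num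
  have hLmem : ∀ x : E, x ∈ Lᗮ ↔ ⟪u, x⟫ = 0 := fun x => by
    rw [hLu]
    exact Submodule.mem_orthogonal_singleton_iff_inner_right
  -- common properties of KG
  have hKGsym : CSymmetric KG := by
    intro c hc
    have hc0 : c ≠ 0 := by intro h; rw [h] at hc; simp at hc
    ext x
    rw [Set.mem_smul_set_iff_inv_smul_mem₀ hc0]
    have hcoe : ((c⁻¹ • x : ↥Γ) : E) = c⁻¹ • (x : E) := rfl
    simp only [hKGdef, Set.mem_preimage, hcoe]
    nth_rewrite 2 [← hCsym c hc]
    exact (Set.mem_smul_set_iff_inv_smul_mem₀ hc0 _ _).symm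
  have hKGcpt : IsCompact KG := by
    haveI : ProperSpace ↥Γ := FiniteDimensional.proper ℂ ↥Γ
    obtain ⟨R, hR⟩ := hCB.1.isBounded.subset_closedBall 0
    have hclosed : IsClosed KG := hCB.1.isClosed.preimage continuous_subtype_val
    refine IsCompact.of_isClosed_subset (isCompact_closedBall 0 R) hclosed ?_
    intro x hx
    have hxb : ‖(x : E)‖ ≤ R := by
      simpa [mem_closedBall_zero_iff] using hR hx
    simpa [mem_closedBall_zero_iff] using hxb
  have hKGconv : Convex ℝ KG := hCB.2.1.linear_preimage ((Γ.subtype).restrictScalars ℝ)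
  have hKGint : (0 : ↥Γ) ∈ interior KG := by
    have hmem : (0 : ↥Γ) ∈ Subtype.val ⁻¹' (interior K) := by
      simpa using h0
    exact interior_maximal (Set.preimage_mono interior_subset)
      (isOpen_interior.preimage continuous_subtype_val) hmem
  have hKGbody : IsConvexBody KG := ⟨hKGcpt, hKGconv, ⟨0, hKGint⟩⟩
  by_cases hcase : u - ⟪w, u⟫ • w = 0
  · -- Case Γ = Lᗮ
    have hμ : u = ⟪w, u⟫ • w := by rwa [sub_eq_zero] at hcase
    have hμn : ‖⟪w, u⟫‖ = 1 := by
      have hh := congrArg norm hμ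
      rw [norm_smul, hw, mul_one] at hh
      rw [← hh, hu]
    have hμ0 : ⟪w, u⟫ ≠ 0 := by
      intro h; rw [h] at hμn; simp at hμn
    have hLw : L = Submodule.span ℂ {w} := by
      rw [hLu]
      nth_rewrite 1 [hμ]
      exact Submodule.span_singleton_smul_eq (IsUnit.mk0 _ hμ0) w
    have hΓL : Γ = Lᗮ := by
      rw [hLw, ← hΓw, Submodule.orthogonal_orthogonal]
    -- study the central slice
    obtain ⟨ε, hε, hball⟩ : ∃ ε > 0, Metric.ball (0 : E) ε ⊆ K := by
      obtain ⟨ε, hε, hb⟩ := Metric.mem_nhds_iff.mp (mem_interior_iff_mem_nhds.mp h0)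
      exact ⟨ε, hε, hb⟩
    have hLobot : Lᗮ ≠ ⊥ := by
      intro h
      have h2 := Submodule.finrank_add_finrank_orthogonal L
      rw [hLrk, h, finrank_bot] at h2
      omega
    obtain ⟨y₀, hy₀L, hy₀0⟩ := Submodule.exists_mem_ne_zero_of_ne_bot hLobot
    set y : E := ((ε / (2 * ‖y₀‖) : ℝ) : ℂ) • y₀ with hydef
    have hyL : y ∈ Lᗮ := Submodule.smul_mem _ _ hy₀L
    have hy₀n : 0 < ‖y₀‖ := norm_pos_iff.mpr hy₀0
    have hyn : ‖y‖ = ε / 2 := by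
      rw [hydef, norm_smul, Complex.norm_real, Real.norm_eq_abs,
        abs_of_pos (by positivity)]
      field_simp
    have hyK : y ∈ K := hball (by rw [mem_ball_zero_iff, hyn]; linarith)
    have hy0 : y ≠ 0 := by
      intro h; rw [h, norm_zero] at hyn; linarith
    have h0S : (0 : E) ∈ {x | x - 0 ∈ Lᗮ} ∩ K :=
      ⟨by simp, interior_subset h0⟩
    have hyS : y ∈ {x | x - 0 ∈ Lᗮ} ∩ K := ⟨by simpa using hyL, hyK⟩
    rcases hslice 0 L.zero_mem with hS | ⟨p, hS⟩ | ⟨r, hr, hS⟩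
    · rw [hS] at h0S; exact absurd h0S (Set.notMem_empty 0)
    · rw [hS, Set.mem_singleton_iff] at h0S hyS
      exact absurd (hyS.trans h0S.symm) hy0
    · -- KG is the closed ball of radius r
      have hKG : KG = Metric.closedBall (0 : ↥Γ) r := by
        ext x
        have hxL : (x : E) ∈ Lᗮ := by rw [← hΓL]; exact x.2
        simp only [hKGdef, Set.mem_preimage, mem_closedBall_zero_iff]
        constructor
        · intro hxK
          have hxS : (x : E) ∈ {x | x - 0 ∈ Lᗮ} ∩ K := ⟨by simpa using hxL, hxK⟩
          rw [hS] at hxS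
          simpa using hxS.2
        · intro hxr
          have hxS : (x : E) ∈ {x | x - 0 ∈ Lᗮ ∧ ‖x - 0‖ ≤ r} :=
            ⟨by simpa using hxL, by simpa using hxr⟩
          rw [← hS] at hxS
          exact hxS.2
      have hΓbot : Γ ≠ ⊥ := by
        intro h; rw [h, finrank_bot] at hΓ; omega
      obtain ⟨b₀, hb₀Γ, hb₀0⟩ := Submodule.exists_mem_ne_zero_of_ne_bot hΓbot
      set b : ↥Γ := ⟨b₀, hb₀Γ⟩ with hbdef
      have hb0 : b ≠ 0 := by
        intro h
        apply hb₀0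
        simpa [hbdef] using congrArg (Subtype.val) h
      set L₀ : Submodule ℂ ↥Γ := Submodule.span ℂ {b} with hL₀def
      have hbody : IsBodyOfRev KG L₀ := by
        rw [hKG]
        exact isBodyOfRev_closedBall (finrank_span_singleton hb0) hr
      constructor
      · exact ⟨_, _, ContinuousLinearEquiv.refl ℂ ↥Γ, KG, L₀, hbody, by simp, rfl, rfl⟩
      · exact Or.inl hΓL
  · -- Case Γ ≠ Lᗮ
    set u' : E := u - ⟪w, u⟫ • w with hu'def
    have hu'Γ : u' ∈ Γ := by
      rw [hΓmem]
      rw [hu'def, inner_sub_right, inner_smul_right, hww, mul_one, sub_self]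
    have hIuu' : ∀ y : E, y ∈ Γ → ⟪u', y⟫ = ⟪u, y⟫ := by
      intro y hy
      rw [hu'def, inner_sub_left, inner_smul_left, (hΓmem y).mp hy, mul_zero, sub_zero]
    set a : ↥Γ := ⟨u', hu'Γ⟩ with hadef
    have ha0 : a ≠ 0 := by
      intro h
      apply hcase
      simpa [hadef] using congrArg (Subtype.val) h
    set L₁ : Submodule ℂ ↥Γ := Submodule.span ℂ {a} with hL₁def
    have hL₁rk : Module.finrank ℂ L₁ = 1 := finrank_span_singleton ha0
    have hL₁mem : ∀ z : ↥Γ, z ∈ L₁ᗮ ↔ ⟪u', (z : E)⟫ = 0 := by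
      intro z
      rw [hL₁def]
      rw [Submodule.mem_orthogonal_singleton_iff_inner_right, Submodule.coe_inner]
    have hG2 : L₁ᗮ = Lᗮ.comap Γ.subtype := by
      ext z
      rw [hL₁mem z, Submodule.mem_comap, hLmem, Submodule.coe_subtype]
      rw [hIuu' _ z.2]
    -- slice analysis
    have hslices : ∀ v ∈ L₁, ({x : ↥Γ | x - v ∈ L₁ᗮ} ∩ KG = ∅) ∨
        (∃ p, {x : ↥Γ | x - v ∈ L₁ᗮ} ∩ KG = {p}) ∨
        (∃ r > (0:ℝ), {x : ↥Γ | x - v ∈ L₁ᗮ} ∩ KG =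
          {x | x - v ∈ L₁ᗮ ∧ ‖x - v‖ ≤ r}) := by
      intro v hv
      rw [hL₁def, Submodule.mem_span_singleton] at hv
      obtain ⟨τ, rfl⟩ := hv
      set t : ℂ := τ * ⟪u, u'⟫ with htdef
      have hvcoe : ((τ • a : ↥Γ) : E) = τ • u' := rfl
      have hvlev : ⟪u, ((τ • a : ↥Γ) : E)⟫ = t := by
        rw [hvcoe, inner_smul_right, htdef]
      have hlevel : ∀ x : ↥Γ, (x - τ • a ∈ L₁ᗮ ↔ ⟪u, (x : E)⟫ = t) := by
        intro x
        rw [hL₁mem]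
        have hc : ((x - τ • a : ↥Γ) : E) = (x : E) - ((τ • a : ↥Γ) : E) := rfl
        rw [hIuu' _ (x - τ • a).2, hc, inner_sub_right, hvlev, sub_eq_zero]
      have hambient : ∀ x : E, (x - t • u ∈ Lᗮ ↔ ⟪u, x⟫ = t) := by
        intro x
        rw [hLmem, inner_sub_right, inner_smul_right, huu, mul_one, sub_eq_zero]
      have hpyth : ∀ x : ↥Γ, ⟪u, (x : E)⟫ = t →
          ‖(x : E) - t • u‖^2 =
            ‖(x : E) - ((τ • a : ↥Γ) : E)‖^2 + ‖((τ • a : ↥Γ) : E) - t • u‖^2 := by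
        intro x hx
        have hA : ((x : E) - ((τ • a : ↥Γ) : E)) + (((τ • a : ↥Γ) : E) - t • u)
            = (x : E) - t • u := by abel
        have hAΓ : (x : E) - ((τ • a : ↥Γ) : E) ∈ Γ := by
          exact Submodule.sub_mem Γ x.2 (τ • a).2
        have hinnerA : ⟪u, (x : E) - ((τ • a : ↥Γ) : E)⟫ = 0 := by
          rw [inner_sub_right, hx, hvlev, sub_self]
        have horth : ⟪((τ • a : ↥Γ) : E) - t • u,
            (x : E) - ((τ • a : ↥Γ) : E)⟫ = 0 := by
          have hB : ((τ • a : ↥Γ) : E) - t • u = τ • (u' - ⟪u, u'⟫ • u) := by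
            rw [hvcoe, htdef, hu'def]
            module
          rw [hB, inner_smul_left]
          rw [inner_sub_left, inner_smul_left, hIuu' _ hAΓ, hinnerA]
          ring
        rw [← hA]
        exact pyth (inner_eq_zero_symm.mp horth)
      have hvL : t • u ∈ L := Submodule.smul_mem _ _ huL
      rcases hslice (t • u) hvL with hS | ⟨p, hS⟩ | ⟨r, hr, hS⟩
      · left
        ext x
        simp only [Set.mem_inter_iff, Set.mem_setOf_eq, Set.mem_empty_iff_false, iff_false,
          not_and]
        intro hx1 hx2
        have hlev := (hlevel x).mp hx1
        have hxS : (x : E) ∈ {x | x - t • u ∈ Lᗮ} ∩ K :=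
          ⟨(hambient _).mpr hlev, hx2⟩
        rw [hS] at hxS
        exact hxS
      · by_cases hT : {x : ↥Γ | x - τ • a ∈ L₁ᗮ} ∩ KG = ∅
        · exact Or.inl hT
        · right; left
          obtain ⟨x₀, hx₀⟩ := Set.nonempty_iff_ne_empty.mpr hT
          refine ⟨x₀, ?_⟩
          have hx₀p : (x₀ : E) = p := by
            have hxS : (x₀ : E) ∈ {x | x - t • u ∈ Lᗮ} ∩ K :=
              ⟨(hambient _).mpr ((hlevel x₀).mp hx₀.1), hx₀.2⟩
            rw [hS] at hxS
            exact hxS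
          ext x
          simp only [Set.mem_inter_iff, Set.mem_setOf_eq, Set.mem_singleton_iff]
          constructor
          · rintro ⟨hx1, hx2⟩
            have hxS : (x : E) ∈ {x | x - t • u ∈ Lᗮ} ∩ K :=
              ⟨(hambient _).mpr ((hlevel x).mp hx1), hx2⟩
            rw [hS] at hxS
            exact Subtype.coe_injective (hxS.trans hx₀p.symm)
          · rintro rfl
            exact hx₀
      · -- ball case
        set δ : ℝ := ‖((τ • a : ↥Γ) : E) - t • u‖ with hδdef
        have hδ0 : 0 ≤ δ := norm_nonneg _
        have hvS : ((τ • a : ↥Γ) : E) ∈ {x | x - t • u ∈ Lᗮ ∧ ‖x - t • u‖ ≤ r} →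
            ((τ • a : ↥Γ) : E) ∈ K := by
          intro hmem
          rw [← hS] at hmem
          exact hmem.2
        rcases lt_trichotomy r δ with hc | hc | hc
        · left
          ext x
          simp only [Set.mem_inter_iff, Set.mem_setOf_eq, Set.mem_empty_iff_false, iff_false,
            not_and]
          intro hx1 hx2
          have hlev := (hlevel x).mp hx1
          have hxS : (x : E) ∈ {x | x - t • u ∈ Lᗮ} ∩ K :=
            ⟨(hambient _).mpr hlev, hx2⟩
          rw [hS] at hxS
          have h2 := hxS.2
          have hp := hpyth x hlev
          nlinarith [norm_nonneg ((x : E) - ((τ • a : ↥Γ) : E)),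
            norm_nonneg ((x : E) - t • u)]
        · right; left
          refine ⟨τ • a, ?_⟩
          have hvK : ((τ • a : ↥Γ) : E) ∈ K := by
            apply hvS
            exact ⟨(hambient _).mpr hvlev, by rw [← hδdef, hc]⟩
          ext x
          simp only [Set.mem_inter_iff, Set.mem_setOf_eq, Set.mem_singleton_iff]
          constructor
          · rintro ⟨hx1, hx2⟩
            have hlev := (hlevel x).mp hx1
            have hxS : (x : E) ∈ {x | x - t • u ∈ Lᗮ} ∩ K :=
              ⟨(hambient _).mpr hlev, hx2⟩
            rw [hS] at hxS
            have h2 := hxS.2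
            have hp := hpyth x hlev
            have hz : ‖(x : E) - ((τ • a : ↥Γ) : E)‖ = 0 := by
              nlinarith [norm_nonneg ((x : E) - ((τ • a : ↥Γ) : E)),
                norm_nonneg ((x : E) - t • u)]
            have := norm_eq_zero.mp hz
            rw [sub_eq_zero] at this
            exact Subtype.coe_injective this
          · rintro rfl
            exact ⟨by simp, hvK⟩
        · right; right
          refine ⟨Real.sqrt (r^2 - δ^2), Real.sqrt_pos.mpr (by nlinarith), ?_⟩
          ext x
          simp only [Set.mem_inter_iff, Set.mem_setOf_eq]
          have hnormx : ‖x - τ • a‖ = ‖(x : E) - ((τ • a : ↥Γ) : E)‖ := rfl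
          constructor
          · rintro ⟨hx1, hx2⟩
            refine ⟨hx1, ?_⟩
            have hlev := (hlevel x).mp hx1
            have hxS : (x : E) ∈ {x | x - t • u ∈ Lᗮ} ∩ K :=
              ⟨(hambient _).mpr hlev, hx2⟩
            rw [hS] at hxS
            have h2 := hxS.2
            have hp := hpyth x hlev
            rw [hnormx]
            have hsq : ‖(x : E) - ((τ • a : ↥Γ) : E)‖^2 ≤ r^2 - δ^2 := by
              nlinarith [norm_nonneg ((x : E) - t • u)]
            calc ‖(x : E) - ((τ • a : ↥Γ) : E)‖
                = Real.sqrt (‖(x : E) - ((τ • a : ↥Γ) : E)‖^2) :=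
                  (Real.sqrt_sq (norm_nonneg _)).symm
              _ ≤ _ := Real.sqrt_le_sqrt hsq
          · rintro ⟨hx1, hx2⟩
            refine ⟨hx1, ?_⟩
            have hlev := (hlevel x).mp hx1
            rw [hnormx] at hx2
            have hsq : ‖(x : E) - ((τ • a : ↥Γ) : E)‖^2 ≤ r^2 - δ^2 := by
              have h3 := Real.sq_sqrt (show (0:ℝ) ≤ r^2 - δ^2 by nlinarith)
              nlinarith [norm_nonneg ((x : E) - ((τ • a : ↥Γ) : E)),
                Real.sqrt_nonneg (r^2 - δ^2)]
            have hp := hpyth x hlev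
            have hle : ‖(x : E) - t • u‖ ≤ r := by
              nlinarith [norm_nonneg ((x : E) - t • u)]
            have hxS : (x : E) ∈ {x | x - t • u ∈ Lᗮ ∧ ‖x - t • u‖ ≤ r} :=
              ⟨(hambient _).mpr hlev, hle⟩
            rw [← hS] at hxS
            exact hxS.2
    have hbody : IsBodyOfRev KG L₁ := ⟨hKGsym, hKGbody, hL₁rk, hslices⟩
    constructor
    · exact ⟨_, _, ContinuousLinearEquiv.refl ℂ ↥Γ, KG, L₁, hbody, by simp, rfl, rfl⟩
    · right
      refine ⟨L₁.map _, ContinuousLinearEquiv.refl ℂ ↥Γ, KG, L₁, hbody, by simp, rfl, ?_⟩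
      rw [← hG2]
      ext z
      simp [Submodule.mem_map]

/-- Every complex hyperplane section of a complex body of revolution in ℂⁿ,
n ≥ 3, is a C-linear body of revolution; moreover, if `H = Lᗮ` is the hyperplane
of revolution, either `Γ = H` or `Γ ∩ H` is a hyperplane of revolution of `Γ ∩ K`. -/
theorem stmt5 {n : ℕ} (hn : 3 ≤ n) (K : Set (Cn n)) (L : Submodule ℂ (Cn n))
    (hK : IsBodyOfRev K L)
    (Γ : Submodule ℂ (Cn n)) (hΓ : Module.finrank ℂ Γ = n - 1) :
    (@IsCLinearBodyOfRev ↥Γ (Submodule.normedAddCommGroup Γ)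
        (Submodule.innerProductSpace Γ) ((↑) ⁻¹' K)) ∧
      (Γ = Lᗮ ∨
        @IsCLinearBodyOfRevHyp ↥Γ (Submodule.normedAddCommGroup Γ)
          (Submodule.innerProductSpace Γ) ((↑) ⁻¹' K) (Lᗮ.comap Γ.subtype)) := by
  have frE : Module.finrank ℂ (Cn n) = n := finrank_euclideanSpace_fin
  exact stmt5_aux (by rw [frE]; exact hn) K L hK Γ (by rw [frE]; exact hΓ)
end
end

section
/- Let K ⊆ C^n, n ≥ 3, be a complex body of revolution with axis of revolution L. If there exists a complex hyperplane Γ through the origin containing L such that Γ ∩ K is a complex ellipsoid, then K itself is a complex ellipsoid. -/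
open Metric Submodule Pointwise

noncomputable section

section Aux
variable {E : Type*} [NormedAddCommGroup E] [InnerProductSpace ℂ E]

lemma zero_mem_interior_of_csymm {K : Set E} (hsym : CSymmetric K) (hconv : Convex ℝ K)
    (hint : (interior K).Nonempty) : 0 ∈ interior K := by
  obtain ⟨x, hx⟩ := hint
  have hneg : (-1 : ℂ) • K = K := hsym (-1) (by simp)
  have hx' : -x ∈ interior K := by
    have h2 : interior ((-1 : ℂ) • K) = (-1 : ℂ) • interior K :=
      interior_smul₀ (by norm_num) K
    rw [hneg] at h2
    rw [h2]
    exact ⟨x, hx, by simp⟩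
  have h3 := hconv.interior hx hx' (by norm_num : (0:ℝ) ≤ 1/2)
    (by norm_num : (0:ℝ) ≤ 1/2) (by norm_num)
  simpa using h3

lemma keyA {K : Set E} {L : Submodule ℂ E} (hK : IsBodyOfRev K L) :
    ∀ v ∈ L, ∀ w ∈ Lᗮ, ∀ w' ∈ Lᗮ, ‖w'‖ ≤ ‖w‖ → v + w ∈ K → v + w' ∈ K := by
  obtain ⟨hsym, ⟨hcomp, hconv, hint⟩, -, hsecs⟩ := hK
  intro v hv w hw w' hw' hle hmem
  have h0 : 0 ∈ interior K := zero_mem_interior_of_csymm hsym hconv hint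
  obtain ⟨ε, hε, hball⟩ : ∃ ε > 0, ball (0:E) ε ⊆ K := by
    rcases Metric.mem_nhds_iff.1 (mem_interior_iff_mem_nhds.1 h0) with ⟨ε, hε, h⟩
    exact ⟨ε, hε, h⟩
  rcases hsecs v hv with hemp | ⟨p, hp⟩ | ⟨r, hr, hsec⟩
  · exact absurd (hemp ▸ ⟨by simp [hw], hmem⟩ : v + w ∈ (∅ : Set E)) (by simp)
  · -- point case: show w = 0
    have hvwp : v + w = p := by
      have : v + w ∈ ({p} : Set E) := hp ▸ ⟨by simp [hw], hmem⟩
      simpa using this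
    have hw0 : w = 0 := by
      by_contra hw0
      have hwn : 0 < ‖w‖ := norm_pos_iff.2 hw0
      set u1 : E := ‖w‖⁻¹ • w with hu1
      have hu1n : ‖u1‖ = 1 := by
        rw [hu1, norm_smul]
        simp [abs_of_pos (inv_pos.2 hwn), inv_mul_cancel₀ hwn.ne']
      have hu1m : u1 ∈ Lᗮ := Lᗮ.smul_of_tower_mem _ hw
      have hwu : w = ‖w‖ • u1 := by
        rw [hu1, smul_smul, mul_inv_cancel₀ hwn.ne', one_smul]
      have hkey : ∀ l : ℝ, 0 < l → l < 1 → l • (v - w) ∈ K := by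
        intro l hl0 hl1
        have hql : ∀ s : ℝ, |s| < ε → l • (v + w) + ((1 - l) * s) • u1 ∈ K := by
          intro s hs
          have h1 : s • u1 ∈ K := hball (by
            simp only [mem_ball, dist_zero_right, norm_smul, hu1n, mul_one]
            exact hs)
          have h2 := hconv hmem h1 hl0.le (by linarith : (0:ℝ) ≤ 1 - l) (by ring)
          rwa [smul_smul] at h2
        have hs0' : |ε/2| < ε := by rw [abs_of_pos (by positivity)]; linarith
        have hs0'' : |(-(ε/2))| < ε := by rwa [abs_neg]
        have hq1 : l • (v + w) + ((1 - l) * (ε/2)) • u1 ∈ K := hql _ hs0'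
        have hq2 : l • (v + w) + ((1 - l) * (-(ε/2))) • u1 ∈ K := hql _ hs0''
        have hlv : l • v ∈ L := L.smul_of_tower_mem _ hv
        have hmemo : ∀ c : ℝ, l • (v + w) + c • u1 - l • v ∈ Lᗮ := by
          intro c
          have h3 : l • (v + w) + c • u1 - l • v = l • w + c • u1 := by
            rw [smul_add]; abel
          rw [h3]
          exact Lᗮ.add_mem (Lᗮ.smul_of_tower_mem _ hw) (Lᗮ.smul_of_tower_mem _ hu1m)
        have hnormc : ∀ c : ℝ, 0 ≤ c →
            ‖l • (v + w) + c • u1 - l • v‖ = l * ‖w‖ + c := by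
          intro c hc
          have h4 : (l * ‖w‖ + c) • u1 = l • w + c • u1 := by
            rw [add_smul, mul_smul, ← hwu]
          have h2 : l • (v + w) + c • u1 - l • v = (l * ‖w‖ + c) • u1 := by
            rw [h4, smul_add]; abel
          rw [h2, norm_smul, hu1n, mul_one, Real.norm_of_nonneg (by positivity)]
        rcases hsecs (l • v) hlv with hemp2 | ⟨p2, hp2⟩ | ⟨R, hR, hsec2⟩
        · exfalso
          have hmm : l • (v + w) + ((1 - l) * (ε/2)) • u1 ∈ {x | x - l • v ∈ Lᗮ} ∩ K :=
            ⟨hmemo _, hq1⟩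
          rw [hemp2] at hmm
          exact hmm
        · exfalso
          have e1 : l • (v + w) + ((1 - l) * (ε/2)) • u1 ∈ {x | x - l • v ∈ Lᗮ} ∩ K :=
            ⟨hmemo _, hq1⟩
          have e2 : l • (v + w) + ((1 - l) * (-(ε/2))) • u1 ∈ {x | x - l • v ∈ Lᗮ} ∩ K :=
            ⟨hmemo _, hq2⟩
          rw [hp2] at e1 e2
          simp only [Set.mem_singleton_iff] at e1 e2
          have e3 : ((1 - l) * (ε/2)) • u1 = ((1 - l) * (-(ε/2))) • u1 :=
            add_left_cancel (e1.trans e2.symm)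
          have h5 : ((1 - l) * (ε/2) - (1 - l) * (-(ε/2))) • u1 = 0 := by
            rw [sub_smul, e3]; abel
          rcases smul_eq_zero.1 h5 with h6 | h6
          · nlinarith
          · rw [h6] at hu1n; simp at hu1n
        · -- ball case at l•v
          have hin : l • (v + w) + ((1 - l) * (ε/2)) • u1 ∈ {x | x - l • v ∈ Lᗮ} ∩ K :=
            ⟨hmemo _, hq1⟩
          rw [hsec2] at hin
          have hRlb : l * ‖w‖ + (1 - l) * (ε/2) ≤ R := by
            have h7 := hin.2
            rwa [hnormc _ (mul_nonneg (by linarith) (by positivity))] at h7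
          have hgoal : l • (v - w) ∈ {x | x - l • v ∈ Lᗮ ∧ ‖x - l • v‖ ≤ R} := by
            have h7 : l • (v - w) - l • v = -(l • w) := by rw [smul_sub]; abel
            constructor
            · rw [h7]
              exact Lᗮ.neg_mem (Lᗮ.smul_of_tower_mem _ hw)
            · rw [h7, norm_neg, norm_smul, Real.norm_of_nonneg hl0.le]
              nlinarith
          rw [← hsec2] at hgoal
          exact hgoal.2
      -- take limit l → 1
      have hcl : v - w ∈ K := by
        have htend : Filter.Tendsto (fun k : ℕ => (1 - ((k:ℝ) + 2)⁻¹) • (v - w))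
            Filter.atTop (nhds (v - w)) := by
          have h1 : Filter.Tendsto (fun k : ℕ => (1 - ((k:ℝ) + 2)⁻¹)) Filter.atTop
              (nhds 1) := by
            have h2 : Filter.Tendsto (fun k : ℕ => ((k:ℝ) + 2)⁻¹) Filter.atTop (nhds 0) := by
              apply Filter.Tendsto.inv_tendsto_atTop
              exact Filter.tendsto_atTop_add_const_right _ 2 tendsto_natCast_atTop_atTop
            simpa using Filter.Tendsto.const_sub 1 h2
          have h3 := h1.smul_const (v - w)
          simpa using h3
        refine hcomp.isClosed.mem_of_tendsto htend ?_
        filter_upwards with k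
        have hk2 : (2:ℝ) ≤ (k:ℝ) + 2 := by nlinarith [Nat.cast_nonneg (α := ℝ) k]
        have hkp : 0 < ((k:ℝ) + 2)⁻¹ := by positivity
        have hkl : ((k:ℝ) + 2)⁻¹ ≤ 1/2 := by
          rw [inv_le_comm₀ (by linarith) (by norm_num)]
          linarith
        exact hkey _ (by linarith) (by linarith)
      have hfin : v - w ∈ {x | x - v ∈ Lᗮ} ∩ K := ⟨by simpa using Lᗮ.neg_mem hw, hcl⟩
      rw [hp, ← hvwp] at hfin
      simp only [Set.mem_singleton_iff] at hfin
      apply hw0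
      have h8 : (2:ℝ) • w = 0 := by
        have h9 : v + w - (v - w) = (2:ℝ) • w := by rw [two_smul]; abel
        rw [← h9]
        nth_rewrite 1 [hfin]
        abel
      simpa using h8
    have hw'0 : w' = 0 := by
      rw [hw0] at hle
      simpa using norm_le_zero_iff.1 (by simpa using hle)
    rw [hw'0]
    rw [hw0] at hmem
    simpa using hmem
  · -- ball case
    have h1 : v + w ∈ {x | x - v ∈ Lᗮ ∧ ‖x - v‖ ≤ r} := hsec ▸ ⟨by simp [hw], hmem⟩
    have h2 : v + w' ∈ {x | x - v ∈ Lᗮ ∧ ‖x - v‖ ≤ r} := by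
      refine ⟨by simp [hw'], ?_⟩
      have h3 := h1.2
      simp only [add_sub_cancel_left] at h3 ⊢
      linarith
    rw [← hsec] at h2
    exact h2.2

variable [FiniteDimensional ℂ E]

lemma ellipsoid_of_quadratic (L : Submodule ℂ E) (K : Set E) (A B : ℝ)
    (hA : 0 < A) (hB : 0 < B)
    (hchar : ∀ x : E, x ∈ K ↔
      A^2 * ‖((orthogonalProjection L x : ↥L) : E)‖^2
        + B^2 * ‖x - ((orthogonalProjection L x : ↥L) : E)‖^2 ≤ 1) :
    IsCEllipsoid K := by
  set P : E →L[ℂ] E := L.subtypeL.comp (orthogonalProjection L) with hPdef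
  have hPapp : ∀ x, P x = ((orthogonalProjection L x : ↥L) : E) := fun _ => rfl
  have hPmem : ∀ x, P x ∈ L := fun x => Submodule.coe_mem _
  have hPperp : ∀ x, x - P x ∈ Lᗮ := fun x => Submodule.sub_starProjection_mem_orthogonal x
  have hPofL : ∀ y ∈ L, P y = y := by
    intro y hy
    rw [hPapp]
    exact Submodule.starProjection_eq_self_iff.2 hy
  have hPofPerp : ∀ y ∈ Lᗮ, P y = 0 := by
    intro y hy
    rw [hPapp, Submodule.orthogonalProjectionOnto_apply_of_mem_orthogonal hy]
    simp
  set f1 : E →L[ℂ] E :=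
    ((A⁻¹ : ℝ) : ℂ) • P + ((B⁻¹ : ℝ) : ℂ) • (ContinuousLinearMap.id ℂ E - P) with hf1
  set f2 : E →L[ℂ] E :=
    ((A : ℝ) : ℂ) • P + ((B : ℝ) : ℂ) • (ContinuousLinearMap.id ℂ E - P) with hf2
  have hf1app : ∀ x, f1 x = ((A⁻¹ : ℝ) : ℂ) • P x + ((B⁻¹ : ℝ) : ℂ) • (x - P x) := by
    intro x
    simp [hf1, ContinuousLinearMap.add_apply, ContinuousLinearMap.smul_apply,
      ContinuousLinearMap.sub_apply]
  have hf2app : ∀ x, f2 x = ((A : ℝ) : ℂ) • P x + ((B : ℝ) : ℂ) • (x - P x) := by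
    intro x
    simp [hf2, ContinuousLinearMap.add_apply, ContinuousLinearMap.smul_apply,
      ContinuousLinearMap.sub_apply]
  have hkeycomp : ∀ (c d c' d' : ℝ) (x : E), c' * c = 1 → d' * d = 1 →
      ((c' : ℝ) : ℂ) • P (((c : ℝ) : ℂ) • P x + ((d : ℝ) : ℂ) • (x - P x))
        + ((d' : ℝ) : ℂ) • ((((c : ℝ) : ℂ) • P x + ((d : ℝ) : ℂ) • (x - P x))
            - P (((c : ℝ) : ℂ) • P x + ((d : ℝ) : ℂ) • (x - P x))) = x := by
    intro c d c' d' x hc hd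
    have h1 : P (((c : ℝ) : ℂ) • P x + ((d : ℝ) : ℂ) • (x - P x)) = ((c : ℝ) : ℂ) • P x := by
      rw [map_add, map_smul, map_smul, hPofL _ (hPmem x), hPofPerp _ (hPperp x), smul_zero,
        add_zero]
    rw [h1]
    have h2 : ((c : ℝ) : ℂ) • P x + ((d : ℝ) : ℂ) • (x - P x) - ((c : ℝ) : ℂ) • P x
        = ((d : ℝ) : ℂ) • (x - P x) := by abel
    rw [h2, smul_smul, smul_smul]
    have hc' : ((c' : ℝ) : ℂ) * ((c : ℝ) : ℂ) = 1 := by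
      rw [← Complex.ofReal_mul, hc, Complex.ofReal_one]
    have hd' : ((d' : ℝ) : ℂ) * ((d : ℝ) : ℂ) = 1 := by
      rw [← Complex.ofReal_mul, hd, Complex.ofReal_one]
    rw [hc', hd', one_smul, one_smul]
    abel
  have h1 : Function.LeftInverse f2 f1 := by
    intro x
    rw [hf1app, hf2app]
    exact hkeycomp A⁻¹ B⁻¹ A B x (mul_inv_cancel₀ hA.ne') (mul_inv_cancel₀ hB.ne')
  have h2 : Function.RightInverse f2 f1 := by
    intro x
    rw [hf2app, hf1app]
    exact hkeycomp A B A⁻¹ B⁻¹ x (inv_mul_cancel₀ hA.ne') (inv_mul_cancel₀ hB.ne')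
  refine ⟨ContinuousLinearEquiv.equivOfInverse f1 f2 h1 h2, ?_⟩
  ext x
  rw [ContinuousLinearEquiv.image_eq_preimage_symm]
  have hsymm : (ContinuousLinearEquiv.equivOfInverse f1 f2 h1 h2).symm x = f2 x := by
    rw [ContinuousLinearEquiv.symm_equivOfInverse]
    rfl
  simp only [Set.mem_preimage, hsymm, mem_closedBall, dist_zero_right]
  have hip : (inner ℂ (((A : ℝ) : ℂ) • P x) (((B : ℝ) : ℂ) • (x - P x)) : ℂ) = 0 :=
    Submodule.inner_right_of_mem_orthogonal (L.smul_mem _ (hPmem x))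
      (Lᗮ.smul_mem _ (hPperp x))
  have hsq : ‖f2 x‖^2 = A^2 * ‖P x‖^2 + B^2 * ‖x - P x‖^2 := by
    rw [hf2app]
    have hns := norm_add_sq (𝕜 := ℂ) (((A : ℝ) : ℂ) • P x) (((B : ℝ) : ℂ) • (x - P x))
    rw [hip] at hns
    simp only [map_zero, mul_zero, add_zero] at hns
    rw [hns, norm_smul, norm_smul, Complex.norm_real, Complex.norm_real,
      Real.norm_of_nonneg hA.le, Real.norm_of_nonneg hB.le]
    ring
  rw [hchar x, ← hPapp x]
  constructor
  · intro h
    nlinarith [norm_nonneg (f2 x), hsq]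
  · intro h
    nlinarith [norm_nonneg (f2 x), hsq]

end Aux

set_option maxHeartbeats 2000000

/-- If a complex body of revolution `K ⊆ ℂⁿ`, n ≥ 3, with axis `L` has a complex
hyperplane section through `L` which is a complex ellipsoid, then `K` is a
complex ellipsoid. -/
theorem stmt6 {n : ℕ} (hn : 3 ≤ n) (K : Set (Cn n)) (L : Submodule ℂ (Cn n))
    (hK : IsBodyOfRev K L)
    (Γ : Submodule ℂ (Cn n)) (hΓ : Module.finrank ℂ Γ = n - 1) (hLΓ : L ≤ Γ)
    (hsec : @IsCEllipsoid ↥Γ (Submodule.normedAddCommGroup Γ)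
      (Submodule.innerProductSpace Γ) ((↑) ⁻¹' K)) :
    IsCEllipsoid K := by
  classical
  obtain ⟨g, hg⟩ := hsec
  have hA := keyA hK
  obtain ⟨hsym, ⟨hcomp, hconv, hint⟩, hL1, hsecs⟩ := hK
  -- membership in K for elements of Γ, via the ellipsoid
  have hE : ∀ y : ↥Γ, ((y : Cn n) ∈ K ↔ ‖g.symm y‖ ≤ 1) := by
    intro y
    have h1 : ((y : Cn n) ∈ K) ↔ y ∈ g '' closedBall 0 1 := by
      rw [hg]; exact Iff.rfl
    rw [h1, ContinuousLinearEquiv.image_eq_preimage_symm]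
    simp only [Set.mem_preimage, mem_closedBall, dist_zero_right]
  -- the norm ‖g.symm ·‖ depends only on the axis component and the norm of the
  -- orthogonal component
  have hdata : ∀ (y y' : ↥Γ) (v w w' : Cn n), v ∈ L → w ∈ Lᗮ → w' ∈ Lᗮ →
      (y : Cn n) = v + w → (y' : Cn n) = v + w' → ‖w'‖ = ‖w‖ →
      ‖g.symm y'‖ ≤ ‖g.symm y‖ := by
    intro y y' v w w' hv hw hw' hy hy' hnorm
    have hstep : ∀ r : ℝ, ‖g.symm y‖ < r → ‖g.symm y'‖ ≤ r := by
      intro r hr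
      have hr0 : 0 < r := lt_of_le_of_lt (norm_nonneg _) hr
      have hrc : ‖((r : ℝ) : ℂ)⁻¹‖ = r⁻¹ := by
        rw [norm_inv, Complex.norm_real, Real.norm_of_nonneg hr0.le]
      have h1 : ‖g.symm (((r : ℝ) : ℂ)⁻¹ • y)‖ ≤ 1 := by
        rw [map_smul, norm_smul, hrc]
        calc r⁻¹ * ‖g.symm y‖ ≤ r⁻¹ * r :=
              mul_le_mul_of_nonneg_left hr.le (inv_pos.2 hr0).le
        _ = 1 := inv_mul_cancel₀ hr0.ne'
      have h2 : ((((r : ℝ) : ℂ)⁻¹ • y : ↥Γ) : Cn n) ∈ K := (hE _).2 h1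
      have h3 : ((((r : ℝ) : ℂ)⁻¹ • y : ↥Γ) : Cn n)
          = ((r : ℝ) : ℂ)⁻¹ • v + ((r : ℝ) : ℂ)⁻¹ • w := by
        rw [Submodule.coe_smul, hy, smul_add]
      have h4 : ((r : ℝ) : ℂ)⁻¹ • v + ((r : ℝ) : ℂ)⁻¹ • w' ∈ K := by
        refine hA (((r : ℝ) : ℂ)⁻¹ • v) (L.smul_mem _ hv) (((r : ℝ) : ℂ)⁻¹ • w)
          (Lᗮ.smul_mem _ hw) (((r : ℝ) : ℂ)⁻¹ • w') (Lᗮ.smul_mem _ hw') ?_ ?_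
        · rw [norm_smul, norm_smul, hnorm]
        · rw [← h3]; exact h2
      have h5 : ‖g.symm (((r : ℝ) : ℂ)⁻¹ • y')‖ ≤ 1 := by
        apply (hE _).1
        rw [Submodule.coe_smul, hy', smul_add]
        exact h4
      rw [map_smul, norm_smul, hrc] at h5
      calc ‖g.symm y'‖ = r * (r⁻¹ * ‖g.symm y'‖) := by
            rw [← mul_assoc, mul_inv_cancel₀ hr0.ne', one_mul]
      _ ≤ r * 1 := mul_le_mul_of_nonneg_left h5 hr0.le
      _ = r := mul_one r
    by_contra hcon
    push_neg at hcon
    obtain ⟨r, hr1, hr2⟩ := exists_between hcon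
    exact absurd (hstep r hr1) (not_le.2 hr2)
  have heq : ∀ (y y' : ↥Γ) (v w w' : Cn n), v ∈ L → w ∈ Lᗮ → w' ∈ Lᗮ →
      (y : Cn n) = v + w → (y' : Cn n) = v + w' → ‖w'‖ = ‖w‖ →
      ‖g.symm y'‖ = ‖g.symm y‖ := fun y y' v w w' hv hw hw' hy hy' hn' =>
    le_antisymm (hdata y y' v w w' hv hw hw' hy hy' hn')
      (hdata y' y v w' w hv hw' hw hy' hy hn'.symm)
  -- a unit vector spanning L
  obtain ⟨u0, hu00, hu0s⟩ := finrank_eq_one_iff'.1 hL1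
  have hu0n : (0:ℝ) < ‖(u0 : Cn n)‖ := by
    rw [norm_pos_iff]
    exact fun h => hu00 (Subtype.ext h)
  set u : Cn n := ((‖(u0 : Cn n)‖⁻¹ : ℝ) : ℂ) • (u0 : Cn n) with hu
  have hun : ‖u‖ = 1 := by
    rw [hu, norm_smul, Complex.norm_real, Real.norm_of_nonneg (inv_pos.2 hu0n).le,
      inv_mul_cancel₀ hu0n.ne']
  have huL : u ∈ L := L.smul_mem _ (Submodule.coe_mem u0)
  have huspan : ∀ v ∈ L, ∃ t : ℂ, t • u = v := by
    intro v hvL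
    obtain ⟨c, hc⟩ := hu0s ⟨v, hvL⟩
    refine ⟨c * ((‖(u0 : Cn n)‖ : ℝ) : ℂ), ?_⟩
    have h1 : ((c • u0 : ↥L) : Cn n) = v := by rw [hc]
    rw [← h1, Submodule.coe_smul, hu, smul_smul, mul_assoc, ← Complex.ofReal_mul,
      mul_inv_cancel₀ hu0n.ne', Complex.ofReal_one, mul_one]
  -- a unit vector in Γ orthogonal to L
  have hfinC : Module.finrank ℂ (Cn n) = n := by
    simp [finrank_euclideanSpace]
  have horthL : Module.finrank ℂ ↥Lᗮ = n - 1 := by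
    have h1 := Submodule.finrank_add_finrank_orthogonal L
    rw [hL1, hfinC] at h1
    omega
  have hinfpos : 0 < Module.finrank ℂ ↥(Γ ⊓ Lᗮ) := by
    have h3 := Submodule.finrank_sup_add_finrank_inf_eq Γ Lᗮ
    have h4 : Module.finrank ℂ ↥(Γ ⊔ Lᗮ) ≤ Module.finrank ℂ (Cn n) :=
      Submodule.finrank_le _
    rw [hfinC] at h4
    rw [hΓ, horthL] at h3
    omega
  obtain ⟨w1', hw1'⟩ : ∃ x : ↥(Γ ⊓ Lᗮ), x ≠ 0 := by
    have := Module.finrank_pos_iff.1 hinfpos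
    exact exists_ne 0
  have hw1n : (0:ℝ) < ‖(w1' : Cn n)‖ := by
    rw [norm_pos_iff]
    exact fun h => hw1' (Subtype.ext h)
  set w1 : Cn n := ((‖(w1' : Cn n)‖⁻¹ : ℝ) : ℂ) • (w1' : Cn n) with hw1def
  have hw1norm : ‖w1‖ = 1 := by
    rw [hw1def, norm_smul, Complex.norm_real, Real.norm_of_nonneg (inv_pos.2 hw1n).le,
      inv_mul_cancel₀ hw1n.ne']
  have hw1mem : (w1' : Cn n) ∈ Γ ⊓ Lᗮ := Submodule.coe_mem w1'
  have hw1Γ : w1 ∈ Γ := Γ.smul_mem _ (Submodule.mem_inf.1 hw1mem).1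
  have hw1L : w1 ∈ Lᗮ := Lᗮ.smul_mem _ (Submodule.mem_inf.1 hw1mem).2
  -- the two vectors inside Γ
  set ut : ↥Γ := ⟨u, hLΓ huL⟩ with hut
  set wt : ↥Γ := ⟨w1, hw1Γ⟩ with hwt
  have hcoeu : (ut : Cn n) = u := rfl
  have hcoew : (wt : Cn n) = w1 := rfl
  set A : ℝ := ‖g.symm ut‖ with hAdef
  set B : ℝ := ‖g.symm wt‖ with hBdef
  have hApos : 0 < A := by
    rw [hAdef, norm_pos_iff]
    intro h
    have h2 : ut = 0 := by
      have := congrArg g h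
      simpa using this
    have h3 : u = 0 := congrArg Subtype.val h2
    rw [h3] at hun
    simp at hun
  have hBpos : 0 < B := by
    rw [hBdef, norm_pos_iff]
    intro h
    have h2 : wt = 0 := by
      have := congrArg g h
      simpa using this
    have h3 : w1 = 0 := congrArg Subtype.val h2
    rw [h3] at hw1norm
    simp at hw1norm
  -- the quadratic formula on Γ
  have hform : ∀ (t : ℂ) (ρ : ℝ), 0 ≤ ρ →
      ‖g.symm (t • ut + ((ρ : ℝ) : ℂ) • wt)‖^2 = ‖t‖^2 * A^2 + ρ^2 * B^2 := by
    intro t ρ hρ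
    have hpar := parallelogram_law_with_norm ℂ (g.symm (t • ut)) (g.symm (((ρ : ℝ) : ℂ) • wt))
    rw [← map_add, ← map_sub] at hpar
    have hcplus : ((t • ut + ((ρ : ℝ) : ℂ) • wt : ↥Γ) : Cn n)
        = t • u + ((ρ : ℝ) : ℂ) • w1 := by
      rw [Submodule.coe_add, Submodule.coe_smul, Submodule.coe_smul, hcoeu, hcoew]
    have hcminus : ((t • ut - ((ρ : ℝ) : ℂ) • wt : ↥Γ) : Cn n)
        = t • u + (-(((ρ : ℝ) : ℂ) • w1)) := by
      rw [Submodule.coe_sub, Submodule.coe_smul, Submodule.coe_smul, hcoeu, hcoew,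
        sub_eq_add_neg]
    have hminus : ‖g.symm (t • ut - ((ρ : ℝ) : ℂ) • wt)‖
        = ‖g.symm (t • ut + ((ρ : ℝ) : ℂ) • wt)‖ := by
      apply heq _ _ (t • u) (((ρ : ℝ) : ℂ) • w1) (-(((ρ : ℝ) : ℂ) • w1))
        (L.smul_mem _ huL) (Lᗮ.smul_mem _ hw1L) (Lᗮ.neg_mem (Lᗮ.smul_mem _ hw1L))
        hcplus hcminus (norm_neg _)
    have ha : ‖g.symm (t • ut)‖ = ‖t‖ * A := by rw [map_smul, norm_smul, hAdef]
    have hb : ‖g.symm (((ρ : ℝ) : ℂ) • wt)‖ = ρ * B := by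
      rw [map_smul, norm_smul, Complex.norm_real, Real.norm_of_nonneg hρ, hBdef]
    rw [hminus, ha, hb] at hpar
    linear_combination hpar / 2
  -- characterization of K
  have hchar : ∀ x : Cn n, x ∈ K ↔
      A^2 * ‖((orthogonalProjection L x : ↥L) : Cn n)‖^2
        + B^2 * ‖x - ((orthogonalProjection L x : ↥L) : Cn n)‖^2 ≤ 1 := by
    intro x
    set v : Cn n := ((orthogonalProjection L x : ↥L) : Cn n) with hvdef
    have hvL : v ∈ L := Submodule.coe_mem _
    have hwL : x - v ∈ Lᗮ := Submodule.sub_starProjection_mem_orthogonal x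
    obtain ⟨t, ht⟩ := huspan v hvL
    set ρ : ℝ := ‖x - v‖ with hρdef
    have hρ0 : 0 ≤ ρ := norm_nonneg _
    set y : ↥Γ := t • ut + ((ρ : ℝ) : ℂ) • wt with hydef
    have hyc : (y : Cn n) = v + ((ρ : ℝ) : ℂ) • w1 := by
      rw [hydef, Submodule.coe_add, Submodule.coe_smul, Submodule.coe_smul, hcoeu, hcoew, ht]
    have hn1 : ‖((ρ : ℝ) : ℂ) • w1‖ = ‖x - v‖ := by
      rw [norm_smul, Complex.norm_real, Real.norm_of_nonneg hρ0, hw1norm, mul_one]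
    have hxdec : x = v + (x - v) := by abel
    have htv : ‖t‖ = ‖v‖ := by rw [← ht, norm_smul, hun, mul_one]
    have h3 := hform t ρ hρ0
    rw [← hydef, htv] at h3
    constructor
    · intro hxK
      have h1 : v + ((ρ : ℝ) : ℂ) • w1 ∈ K := by
        refine hA v hvL (x - v) hwL _ (Lᗮ.smul_mem _ hw1L) (le_of_eq hn1) ?_
        rw [← hxdec]
        exact hxK
      have h2 : ‖g.symm y‖ ≤ 1 := by
        apply (hE y).1
        rw [hyc]
        exact h1
      nlinarith [norm_nonneg (g.symm y), h2, h3]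
    · intro hle1
      have h2 : ‖g.symm y‖ ≤ 1 := by
        nlinarith [norm_nonneg (g.symm y), h3]
      have h4 : (y : Cn n) ∈ K := (hE y).2 h2
      rw [hyc] at h4
      have h5 : v + (x - v) ∈ K :=
        hA v hvL (((ρ : ℝ) : ℂ) • w1) (Lᗮ.smul_mem _ hw1L) (x - v) hwL
          (le_of_eq hn1.symm) h4
      rw [← hxdec] at h5
      exact h5
  exact ellipsoid_of_quadratic L K A B hApos hBpos hchar
end
end

section
/- Let K ⊆ C^n be a C-symmetric convex body whose unique minimal-volume circumscribed complex ellipsoid centered at the origin is the unit ball. Then every C-linear isomorphism g of C^n with positive real determinant satisfying g(K) = K lies in SU(n). -/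
open Metric Submodule Pointwise MeasureTheory
open scoped ENNReal

noncomputable section

/-- A linear map mapping the closed unit ball into itself is norm-nonincreasing. -/
lemma norm_le_of_mapsTo_ball {n : ℕ} (e : Cn n →ₗ[ℂ] Cn n)
    (he : ∀ x ∈ closedBall (0 : Cn n) 1, e x ∈ closedBall (0 : Cn n) 1) (x : Cn n) :
    ‖e x‖ ≤ ‖x‖ := by
  rcases eq_or_ne x 0 with rfl | hx
  · simp
  · have hxpos : (0:ℝ) < ‖x‖ := norm_pos_iff.mpr hx
    set c : ℂ := ((‖x‖⁻¹ : ℝ) : ℂ)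
    have hc : ‖c‖ = ‖x‖⁻¹ := by
      simp [c, abs_of_nonneg (inv_nonneg.mpr hxpos.le)]
    have hmem : c • x ∈ closedBall (0 : Cn n) 1 := by
      rw [mem_closedBall_zero_iff, norm_smul, hc, inv_mul_cancel₀ hxpos.ne']
    have := he _ hmem
    rw [LinearMap.map_smul, mem_closedBall_zero_iff, norm_smul, hc,
      inv_mul_le_iff₀ hxpos, mul_one] at this
    exact this

/-- If the unique minimal-volume circumscribed complex ellipsoid (centred at the
origin) of a C-symmetric convex body `K ⊆ ℂⁿ` is the unit ball (volume being any
Haar measure on `ℂⁿ`), then every C-linear automorphism of `ℂⁿ` with positive real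
determinant preserving `K` is in `SU(n)`: it is an isometry with determinant `1`. -/
theorem stmt11 {n : ℕ} [MeasurableSpace (Cn n)] [BorelSpace (Cn n)]
    (μ : Measure (Cn n)) [μ.IsAddHaarMeasure]
    (K : Set (Cn n)) (hbody : IsConvexBody K) (hsym : CSymmetric K)
    (hsub : K ⊆ closedBall 0 1)
    (hmin : ∀ E : Set (Cn n), IsCEllipsoid E → K ⊆ E →
      μ (closedBall (0 : Cn n) 1) ≤ μ E ∧
        (μ E = μ (closedBall (0 : Cn n) 1) → E = closedBall 0 1))
    (g : Cn n ≃ₗ[ℂ] Cn n)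
    (hdet : ∃ r : ℝ, 0 < r ∧ LinearMap.det (g : Cn n →ₗ[ℂ] Cn n) = (r : ℂ))
    (hKg : g '' K = K) :
    (∀ x : Cn n, ‖g x‖ = ‖x‖) ∧ LinearMap.det (g : Cn n →ₗ[ℂ] Cn n) = 1 := by
  classical
  set B : Set (Cn n) := closedBall 0 1 with hBdef
  set gl : Cn n →ₗ[ℂ] Cn n := (g : Cn n →ₗ[ℂ] Cn n) with hgl
  set gl' : Cn n →ₗ[ℂ] Cn n := (g.symm : Cn n →ₗ[ℂ] Cn n) with hgl'
  -- the images of the unit ball are complex ellipsoids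
  have hG : IsCEllipsoid (g '' B) := ⟨g.toContinuousLinearEquiv, rfl⟩
  have hG' : IsCEllipsoid (g.symm '' B) := ⟨g.symm.toContinuousLinearEquiv, rfl⟩
  -- K is contained in both images
  have hK1 : K ⊆ g '' B := by
    conv_lhs => rw [← hKg]
    exact Set.image_mono hsub
  have hKg' : g.symm '' K = K := by
    have := congrArg (fun s => g.symm '' s) hKg
    simpa [Set.image_image] using this.symm
  have hK2 : K ⊆ g.symm '' B := by
    conv_lhs => rw [← hKg']
    exact Set.image_mono hsub
  -- measure of images
  have him : ∀ (e : Cn n ≃ₗ[ℂ] Cn n) (s : Set (Cn n)),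
      μ (⇑e '' s) =
        ENNReal.ofReal |LinearMap.det ((e : Cn n →ₗ[ℂ] Cn n).restrictScalars ℝ)| * μ s := by
    intro e s
    exact μ.addHaar_image_linearMap ((e : Cn n →ₗ[ℂ] Cn n).restrictScalars ℝ) s
  set d : ℝ := LinearMap.det (gl.restrictScalars ℝ) with hd
  set d' : ℝ := LinearMap.det (gl'.restrictScalars ℝ) with hd'
  have hdd : d * d' = 1 := by
    rw [hd, hd', ← LinearMap.det_comp]
    have hcomp : (gl.restrictScalars ℝ).comp (gl'.restrictScalars ℝ) = LinearMap.id := by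
      ext x
      simp [hgl, hgl']
    rw [hcomp, LinearMap.det_id]
  have hm0 : μ B ≠ 0 :=
    ((measure_ball_pos μ (0 : Cn n) one_pos).trans_le
      (measure_mono ball_subset_closedBall)).ne'
  have hmt : μ B ≠ ⊤ := (isCompact_closedBall (0 : Cn n) 1).measure_lt_top.ne
  have h1 : (1:ℝ) ≤ |d| := by
    have hle : μ B ≤ ENNReal.ofReal |d| * μ B := by
      have := (hmin (g '' B) hG hK1).1
      rwa [him g B] at this
    have : (1:ℝ≥0∞) * μ B ≤ ENNReal.ofReal |d| * μ B := by rwa [one_mul]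
    have h1' : (1:ℝ≥0∞) ≤ ENNReal.ofReal |d| :=
      (ENNReal.mul_le_mul_iff_left hm0 hmt).mp this
    rwa [ENNReal.one_le_ofReal] at h1'
  have h2 : (1:ℝ) ≤ |d'| := by
    have hle : μ B ≤ ENNReal.ofReal |d'| * μ B := by
      have := (hmin (g.symm '' B) hG' hK2).1
      rwa [him g.symm B] at this
    have : (1:ℝ≥0∞) * μ B ≤ ENNReal.ofReal |d'| * μ B := by rwa [one_mul]
    have h2' : (1:ℝ≥0∞) ≤ ENNReal.ofReal |d'| :=
      (ENNReal.mul_le_mul_iff_left hm0 hmt).mp this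
    rwa [ENNReal.one_le_ofReal] at h2'
  have habs : |d| = 1 := by
    have hprod : |d| * |d'| = 1 := by rw [← abs_mul, hdd, abs_one]
    have hle1 : |d| ≤ 1 := by
      nlinarith
    linarith
  -- hence g maps the unit ball onto itself
  have hmeq : μ (g '' B) = μ B := by
    rw [him g B, ← hd, habs, ENNReal.ofReal_one, one_mul]
  have hBeq : g '' B = B := (hmin (g '' B) hG hK1).2 hmeq
  have hBeq' : g.symm '' B = B := by
    have := congrArg (fun s => g.symm '' s) hBeq
    simpa [Set.image_image] using this.symm
  -- isometry
  have hle1 : ∀ x, ‖g x‖ ≤ ‖x‖ := by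
    refine norm_le_of_mapsTo_ball gl (fun x hx => ?_)
    exact hBeq.subset (Set.mem_image_of_mem _ hx)
  have hle2 : ∀ x, ‖g.symm x‖ ≤ ‖x‖ := by
    refine norm_le_of_mapsTo_ball gl' (fun x hx => ?_)
    exact hBeq'.subset (Set.mem_image_of_mem _ hx)
  have hisom : ∀ x : Cn n, ‖g x‖ = ‖x‖ := by
    intro x
    refine le_antisymm (hle1 x) ?_
    have := hle2 (g x)
    simpa using this
  refine ⟨hisom, ?_⟩
  -- determinant is 1
  obtain ⟨r, hr, hdetr⟩ := hdet
  set e : Cn n ≃ₗᵢ[ℂ] Cn n := { g with norm_map' := hisom } with he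
  have hinner : ∀ x y : Cn n, inner ℂ (g x) (g y) = (inner ℂ x y : ℂ) := fun x y =>
    e.inner_map_map x y
  have hadj : (LinearMap.adjoint gl).comp gl = LinearMap.id := by
    apply LinearMap.ext
    intro x
    apply ext_inner_right ℂ
    intro y
    rw [LinearMap.comp_apply, LinearMap.adjoint_inner_left, LinearMap.id_apply]
    exact hinner x y
  have hmul : LinearMap.det (LinearMap.adjoint gl) * LinearMap.det gl = 1 := by
    rw [← LinearMap.det_comp, hadj, LinearMap.det_id]
  have hconj : LinearMap.det (LinearMap.adjoint gl) = star (LinearMap.det gl) := by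
    set b := (EuclideanSpace.basisFun (Fin n) ℂ) with hb
    rw [← LinearMap.det_toMatrix b.toBasis, ← LinearMap.det_toMatrix b.toBasis,
      LinearMap.toMatrix_adjoint b b, Matrix.det_conjTranspose]
  rw [hconj, hdetr] at hmul
  have hrr : (r:ℂ) * (r:ℂ) = 1 := by
    rwa [Complex.star_def, Complex.conj_ofReal] at hmul
  have : r * r = 1 := by exact_mod_cast hrr
  have hr1 : r = 1 := by nlinarith
  rw [hdetr, hr1, Complex.ofReal_one]
end
end

section
/- Let K ⊆ C^n be a complex body of revolution with axis L, hyperplane of revolution H = L^⊥, such that H ∩ K equals the unit ball of H and Γ ∩ K equals the unit ball of Γ for some complex hyperplane Γ through the origin containing L. Then K equals the unit ball of C^n. -/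
open Metric Submodule Pointwise

noncomputable section

/-- Pythagoras for a point whose difference with `v ∈ L` lies in `Lᗮ`. -/
lemma pyth_aux {n : ℕ} (L : Submodule ℂ (Cn n)) {v x : Cn n} (hv : v ∈ L)
    (hx : x - v ∈ Lᗮ) : ‖x‖ ^ 2 = ‖v‖ ^ 2 + ‖x - v‖ ^ 2 := by
  have h := norm_add_sq_eq_norm_sq_add_norm_sq_of_inner_eq_zero v (x - v)
    (Submodule.inner_right_of_mem_orthogonal hv hx)
  simp only [add_sub_cancel] at h
  simpa [pow_two] using h

/-- Existence of a unit vector in `Γ ⊓ Lᗮ`. -/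
lemma exists_unit_aux {n : ℕ} (hn : 3 ≤ n) (L Γ : Submodule ℂ (Cn n))
    (hL1 : Module.finrank ℂ L = 1) (hΓ : Module.finrank ℂ Γ = n - 1) :
    ∃ w₀ : Cn n, w₀ ∈ Γ ∧ w₀ ∈ Lᗮ ∧ ‖w₀‖ = 1 := by
  have hdim : Module.finrank ℂ (Cn n) = n := finrank_euclideanSpace_fin
  have hLperp : Module.finrank ℂ (Lᗮ : Submodule ℂ (Cn n)) = n - 1 := by
    have := Submodule.finrank_add_finrank_orthogonal (K := L)
    omega
  have hsum := Submodule.finrank_sup_add_finrank_inf_eq Γ Lᗮ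
  have hle : Module.finrank ℂ ((Γ ⊔ Lᗮ : Submodule ℂ (Cn n))) ≤ n := by
    have := Submodule.finrank_le (Γ ⊔ Lᗮ : Submodule ℂ (Cn n))
    omega
  have hpos : Module.finrank ℂ ((Γ ⊓ Lᗮ : Submodule ℂ (Cn n))) ≠ 0 := by omega
  have hne : (Γ ⊓ Lᗮ : Submodule ℂ (Cn n)) ≠ ⊥ := by
    intro h
    rw [h] at hpos
    simp at hpos
  obtain ⟨u, hu, hu0⟩ := (Submodule.ne_bot_iff _).mp hne
  refine ⟨((‖u‖ : ℂ))⁻¹ • u, Submodule.smul_mem _ _ hu.1, Submodule.smul_mem _ _ hu.2, ?_⟩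
  rw [norm_smul]
  simp [norm_ne_zero_iff.mpr hu0]

set_option maxHeartbeats 1000000 in
/-- If a complex body of revolution `K ⊆ ℂⁿ` with axis `L` satisfies that its
sections by `H = L^⊥` and by some complex hyperplane `Γ` containing `L` are both
unit balls, then `K` is the unit ball. -/
theorem stmt19 {n : ℕ} (hn : 3 ≤ n) (K : Set (Cn n)) (L : Submodule ℂ (Cn n))
    (hK : IsBodyOfRev K L)
    (hH : (Lᗮ : Set (Cn n)) ∩ K = (Lᗮ : Set (Cn n)) ∩ closedBall 0 1)
    (Γ : Submodule ℂ (Cn n)) (hΓ : Module.finrank ℂ Γ = n - 1) (hLΓ : L ≤ Γ)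
    (hΓK : (Γ : Set (Cn n)) ∩ K = (Γ : Set (Cn n)) ∩ closedBall 0 1) :
    K = closedBall 0 1 := by
  obtain ⟨hCsym, hconv, hL1, hslice⟩ := hK
  have hcvx : Convex ℝ K := hconv.2.1
  obtain ⟨w₀, hw₀Γ, hw₀L, hw₀n⟩ := exists_unit_aux hn L Γ hL1 hΓ
  -- membership in K for points of Γ
  have hΓK' : ∀ y : Cn n, y ∈ Γ → (y ∈ K ↔ ‖y‖ ≤ 1) := by
    intro y hy
    constructor
    · intro hyK
      have h : y ∈ (Γ : Set (Cn n)) ∩ K := ⟨hy, hyK⟩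
      rw [hΓK] at h
      simpa [mem_closedBall_zero_iff] using h.2
    · intro h1
      have h : y ∈ (Γ : Set (Cn n)) ∩ closedBall 0 1 :=
        ⟨hy, by simpa [mem_closedBall_zero_iff] using h1⟩
      rw [← hΓK] at h
      exact h.2
  -- key slice lemma
  have key : ∀ v ∈ L, {x | x - v ∈ Lᗮ} ∩ K = {x | x - v ∈ Lᗮ} ∩ closedBall 0 1 := by
    intro v hv
    have hvΓ : v ∈ Γ := hLΓ hv
    -- basic facts about the test points v + (t:ℂ) • w₀
    have hptL : ∀ t : ℝ, (v + (t:ℂ) • w₀) - v ∈ Lᗮ := by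
      intro t
      simpa [add_sub_cancel_left] using Submodule.smul_mem Lᗮ (t:ℂ) hw₀L
    have hptn : ∀ t : ℝ, ‖(v + (t:ℂ) • w₀) - v‖ = |t| := by
      intro t
      rw [add_sub_cancel_left, norm_smul, hw₀n, Complex.norm_real, Real.norm_eq_abs, mul_one]
    have hptΓ : ∀ t : ℝ, v + (t:ℂ) • w₀ ∈ Γ :=
      fun t => Submodule.add_mem _ hvΓ (Submodule.smul_mem _ _ hw₀Γ)
    have hptsq : ∀ t : ℝ, ‖v + (t:ℂ) • w₀‖ ^ 2 = ‖v‖ ^ 2 + t ^ 2 := by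
      intro t
      have h := pyth_aux L hv (hptL t)
      rw [hptn t] at h
      rw [h, sq_abs]
    rcases hslice v hv with hemp | ⟨p, hp⟩ | ⟨r, hr0, heq⟩
    · -- empty slice : the ball slice is empty too
      rw [hemp]
      symm
      rw [Set.eq_empty_iff_forall_notMem]
      rintro x ⟨hxv, hx1⟩
      rw [mem_closedBall_zero_iff] at hx1
      have hpx := pyth_aux L hv hxv
      have hv1 : ‖v‖ ≤ 1 := by nlinarith [norm_nonneg (x - v), norm_nonneg v, norm_nonneg x]
      have hvK : v ∈ K := (hΓK' v hvΓ).mpr hv1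
      have hmem : v ∈ ({x | x - v ∈ Lᗮ} ∩ K) := ⟨by simp, hvK⟩
      rw [hemp] at hmem
      exact absurd hmem (Set.notMem_empty v)
    · -- singleton slice
      have hpmem : p ∈ {x | x - v ∈ Lᗮ} ∩ K := by rw [hp]; rfl
      obtain ⟨hpL, hpK⟩ := hpmem
      -- ¬ ‖v‖ < 1
      have hnlt : ¬ ‖v‖ < 1 := by
        intro hlt
        set t := Real.sqrt (1 - ‖v‖ ^ 2) with ht
        have ht0 : 0 < t := Real.sqrt_pos.mpr (by nlinarith [norm_nonneg v])
        have ht2 : t ^ 2 = 1 - ‖v‖ ^ 2 := Real.sq_sqrt (by nlinarith [norm_nonneg v])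
        have hin : ∀ s : ℝ, s ^ 2 = t ^ 2 → v + (s:ℂ) • w₀ = p := by
          intro s hs
          have hK1 : v + (s:ℂ) • w₀ ∈ K := by
            refine (hΓK' _ (hptΓ s)).mpr ?_
            have := hptsq s
            nlinarith [norm_nonneg (v + (s:ℂ) • w₀)]
          have hm : v + (s:ℂ) • w₀ ∈ {x | x - v ∈ Lᗮ} ∩ K := ⟨hptL s, hK1⟩
          rw [hp] at hm
          exact Set.mem_singleton_iff.mp hm
        have h1 := hin t rfl
        have h2 := hin (-t) (by ring)
        rw [← h2] at h1
        have h3 : (t:ℂ) • w₀ = ((-t : ℝ):ℂ) • w₀ := add_left_cancel h1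
        have h4 : ((t:ℂ) - ((-t : ℝ):ℂ)) • w₀ = 0 := by
          rw [sub_smul, h3, sub_self]
        rcases smul_eq_zero.mp h4 with h5 | h5
        · norm_cast at h5
          linarith
        · rw [h5] at hw₀n; simp at hw₀n
      -- ¬ 1 < ‖v‖
      have hngt : ¬ 1 < ‖v‖ := by
        intro hgt
        have hv0 : ‖v‖ ≠ 0 := by linarith
        set s : ℝ := ‖v‖⁻¹ with hs
        have hs0 : 0 < s := inv_pos.mpr (by linarith)
        have hs1 : s < 1 := by
          rw [hs]
          rw [inv_lt_one_iff₀]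
          right; exact hgt
        have h0K : (0 : Cn n) ∈ K := (hΓK' 0 (Submodule.zero_mem Γ)).mpr (by simp)
        have hzK : (s:ℂ) • p ∈ K := by
          have hcomb := hcvx hpK h0K hs0.le (by linarith : (0:ℝ) ≤ 1 - s) (by ring)
          have : s • p = ((s:ℝ):ℂ) • p := by
            rw [← Complex.coe_algebraMap, algebraMap_smul]
          simpa [← this] using hcomb
        set u : Cn n := (s:ℂ) • v with hu
        have huL : u ∈ L := Submodule.smul_mem _ _ hv
        have huΓ : u ∈ Γ := hLΓ huL
        have hsnorm : ‖(s:ℂ)‖ = s := by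
          rw [Complex.norm_real, Real.norm_eq_abs]
          exact abs_of_pos hs0
        have hun : ‖u‖ = 1 := by
          rw [hu, norm_smul, hsnorm, hs]
          field_simp
        have hzsl : (s:ℂ) • p ∈ {x | x - u ∈ Lᗮ} ∩ K := by
          refine ⟨?_, hzK⟩
          show (s:ℂ) • p - u ∈ Lᗮ
          rw [hu, ← smul_sub]
          exact Submodule.smul_mem _ _ hpL
        have huK : u ∈ K := (hΓK' u huΓ).mpr hun.le
        have husl : u ∈ {x | x - u ∈ Lᗮ} ∩ K := ⟨by simp, huK⟩
        rcases hslice u huL with hemp' | ⟨q, hq⟩ | ⟨r, hr0, heq⟩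
        · rw [hemp'] at hzsl
          exact absurd hzsl (Set.notMem_empty _)
        · rw [hq] at hzsl husl
          have e1 : (s:ℂ) • p = q := Set.mem_singleton_iff.mp hzsl
          have e2 : u = q := Set.mem_singleton_iff.mp husl
          have hpv : p = v := by
            have h5 : (s:ℂ) • p = (s:ℂ) • v := by
              rw [← hu]
              exact e1.trans e2.symm
            have hsne : (s:ℂ) ≠ 0 := by
              simp only [ne_eq, Complex.ofReal_eq_zero]
              exact hs0.ne'
            exact smul_right_injective _ hsne h5
          have : ‖v‖ ≤ 1 := (hΓK' v hvΓ).mp (hpv ▸ hpK)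
          linarith
        · -- slice at u is a positive-radius ball: contradiction since ‖u‖ = 1
          have hnormr : ‖(r:ℂ) • w₀‖ = r := by
            rw [norm_smul, hw₀n, Complex.norm_real, Real.norm_eq_abs, mul_one]
            exact abs_of_pos hr0
          have hmem : u + (r:ℂ) • w₀ ∈ {x | x - u ∈ Lᗮ} ∩ K := by
            rw [heq]
            refine ⟨?_, ?_⟩
            · simpa [add_sub_cancel_left] using Submodule.smul_mem Lᗮ (r:ℂ) hw₀L
            · rw [add_sub_cancel_left]
              exact le_of_eq hnormr
          have hmΓ : u + (r:ℂ) • w₀ ∈ Γ :=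
            Submodule.add_mem _ huΓ (Submodule.smul_mem _ _ hw₀Γ)
          have hle1 : ‖u + (r:ℂ) • w₀‖ ≤ 1 := (hΓK' _ hmΓ).mp hmem.2
          have hsq : ‖u + (r:ℂ) • w₀‖ ^ 2 = ‖u‖ ^ 2 + r ^ 2 := by
            have hL' : (u + (r:ℂ) • w₀) - u ∈ Lᗮ := by
              simpa [add_sub_cancel_left] using Submodule.smul_mem Lᗮ (r:ℂ) hw₀L
            have h := pyth_aux L huL hL'
            rw [add_sub_cancel_left, hnormr] at h
            exact h
          rw [hun] at hsq
          nlinarith [norm_nonneg (u + (r:ℂ) • w₀)]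
      have hv1 : ‖v‖ = 1 := le_antisymm (not_lt.mp hngt) (not_lt.mp hnlt)
      have hvK : v ∈ K := (hΓK' v hvΓ).mpr hv1.le
      have hpv : p = v := by
        have hmem : v ∈ {x | x - v ∈ Lᗮ} ∩ K := ⟨by simp, hvK⟩
        rw [hp] at hmem
        exact (Set.mem_singleton_iff.mp hmem).symm
      rw [hp, hpv]
      ext x
      simp only [Set.mem_singleton_iff, Set.mem_inter_iff, Set.mem_setOf_eq,
        mem_closedBall_zero_iff]
      constructor
      · rintro rfl
        exact ⟨by simp, hv1.le⟩
      · rintro ⟨hxL, hx1⟩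
        have hpx := pyth_aux L hv hxL
        have h0 : ‖x - v‖ = 0 := by nlinarith [norm_nonneg (x - v), norm_nonneg x]
        have := norm_eq_zero.mp h0
        exact sub_eq_zero.mp this
    · -- ball slice of radius r
      have hmem : v + (r:ℂ) • w₀ ∈ {x | x - v ∈ Lᗮ} ∩ K := by
        rw [heq]
        refine ⟨hptL r, ?_⟩
        rw [hptn r]
        exact le_of_eq (abs_of_pos hr0)
      have hle1 : ‖v + (r:ℂ) • w₀‖ ≤ 1 := (hΓK' _ (hptΓ r)).mp hmem.2
      have hub : ‖v‖ ^ 2 + r ^ 2 ≤ 1 := by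
        have := hptsq r
        nlinarith [norm_nonneg (v + (r:ℂ) • w₀)]
      have hvlt : ‖v‖ < 1 := by nlinarith [norm_nonneg v]
      set t := Real.sqrt (1 - ‖v‖ ^ 2) with ht
      have ht0 : 0 < t := Real.sqrt_pos.mpr (by nlinarith [norm_nonneg v])
      have ht2 : t ^ 2 = 1 - ‖v‖ ^ 2 := Real.sq_sqrt (by nlinarith [norm_nonneg v])
      have htK : v + (t:ℂ) • w₀ ∈ K := by
        refine (hΓK' _ (hptΓ t)).mpr ?_
        have := hptsq t
        nlinarith [norm_nonneg (v + (t:ℂ) • w₀)]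
      have htr : t ≤ r := by
        have hmem2 : v + (t:ℂ) • w₀ ∈ {x | x - v ∈ Lᗮ} ∩ K := ⟨hptL t, htK⟩
        rw [heq] at hmem2
        have := hmem2.2
        rw [hptn t, abs_of_pos ht0] at this
        exact this
      have hr2 : r ^ 2 = 1 - ‖v‖ ^ 2 := by nlinarith
      rw [heq]
      ext x
      simp only [Set.mem_setOf_eq, Set.mem_inter_iff, mem_closedBall_zero_iff]
      constructor
      · rintro ⟨hxL, hxr⟩
        refine ⟨hxL, ?_⟩
        have hpx := pyth_aux L hv hxL
        nlinarith [norm_nonneg x, norm_nonneg (x - v)]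
      · rintro ⟨hxL, hx1⟩
        refine ⟨hxL, ?_⟩
        have hpx := pyth_aux L hv hxL
        nlinarith [norm_nonneg x, norm_nonneg (x - v)]
  -- conclude
  ext x
  set v : Cn n := ((orthogonalProjection L x : L) : Cn n) with hvdef
  have hvL : v ∈ L := SetLike.coe_mem _
  have hxv : x - v ∈ Lᗮ := Submodule.sub_starProjection_mem_orthogonal (K := L) x
  have h := key v hvL
  constructor
  · intro hxK
    have hmem : x ∈ {x' | x' - v ∈ Lᗮ} ∩ K := ⟨hxv, hxK⟩
    rw [h] at hmem
    exact hmem.2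
  · intro hxB
    have hmem : x ∈ {x' | x' - v ∈ Lᗮ} ∩ closedBall 0 1 := ⟨hxv, hxB⟩
    rw [← h] at hmem
    exact hmem.2
end
end
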